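/- Compatibility of downgrade and upgrade: assume either (n < m and p = precise) or (□ = ≲ and p = imprecise). Then (i) if Γ ⊢ t □ₙ t̲ : EmulDV_{m+d;p} then Γ ⊢ downgrade_{m;d} t □ₙ t̲ : EmulDV_{m;p}; and (ii) if Γ ⊢ t □ₙ t̲ : EmulDV_{m;p} then Γ ⊢ upgrade_{m;d} t □ₙ t̲ : EmulDV_{m+d;p}. -/

import Mathlib

set_option maxHeartbeats 1000000

namespace FAC

/-! ## Source language λτ : simply-typed CBV lambda calculus -/

inductive Ty : Type
  | unit : Ty
  | bool : Ty
  | arr (a b : Ty) : Ty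
  | prod (a b : Ty) : Ty
  | sum (a b : Ty) : Ty
deriving DecidableEq

inductive STm : Type
  | var (n : ℕ)
  | unit | tt | ff
  | lam (τ : Ty) (t : STm)
  | app (t₁ t₂ : STm)
  | pair (t₁ t₂ : STm)
  | p1 (t : STm)
  | p2 (t : STm)
  | inl (t : STm)
  | inr (t : STm)
  | caseOf (t t₁ t₂ : STm)   -- branches bind de Bruijn index 0
  | seq (t₁ t₂ : STm)
  | tif (t t₁ t₂ : STm)
  | fixt (a b : Ty) (t : STm)
deriving DecidableEq

inductive SIsVal : STm → Prop
  | unit : SIsVal .unit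
  | tt : SIsVal .tt
  | ff : SIsVal .ff
  | lam {τ t} : SIsVal (.lam τ t)
  | pair {t₁ t₂} : SIsVal t₁ → SIsVal t₂ → SIsVal (.pair t₁ t₂)
  | inl {t} : SIsVal t → SIsVal (.inl t)
  | inr {t} : SIsVal t → SIsVal (.inr t)

def liftR (f : ℕ → ℕ) : ℕ → ℕ
  | 0 => 0
  | n+1 => f n + 1

def STm.rename (f : ℕ → ℕ) : STm → STm
  | .var n => .var (f n)
  | .unit => .unit
  | .tt => .tt
  | .ff => .ff
  | .lam τ t => .lam τ (t.rename (liftR f))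
  | .app a b => .app (a.rename f) (b.rename f)
  | .pair a b => .pair (a.rename f) (b.rename f)
  | .p1 t => .p1 (t.rename f)
  | .p2 t => .p2 (t.rename f)
  | .inl t => .inl (t.rename f)
  | .inr t => .inr (t.rename f)
  | .caseOf t a b => .caseOf (t.rename f) (a.rename (liftR f)) (b.rename (liftR f))
  | .seq a b => .seq (a.rename f) (b.rename f)
  | .tif t a b => .tif (t.rename f) (a.rename f) (b.rename f)
  | .fixt a b t => .fixt a b (t.rename f)

def liftS (σ : ℕ → STm) : ℕ → STm
  | 0 => .var 0
  | n+1 => (σ n).rename Nat.succ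

def STm.subst (σ : ℕ → STm) : STm → STm
  | .var n => σ n
  | .unit => .unit
  | .tt => .tt
  | .ff => .ff
  | .lam τ t => .lam τ (t.subst (liftS σ))
  | .app a b => .app (a.subst σ) (b.subst σ)
  | .pair a b => .pair (a.subst σ) (b.subst σ)
  | .p1 t => .p1 (t.subst σ)
  | .p2 t => .p2 (t.subst σ)
  | .inl t => .inl (t.subst σ)
  | .inr t => .inr (t.subst σ)
  | .caseOf t a b => .caseOf (t.subst σ) (a.subst (liftS σ)) (b.subst (liftS σ))
  | .seq a b => .seq (a.subst σ) (b.subst σ)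
  | .tif t a b => .tif (t.subst σ) (a.subst σ) (b.subst σ)
  | .fixt a b t => .fixt a b (t.subst σ)

/-- substitute `v` for de Bruijn index 0 in `t` -/
def STm.subst0 (t v : STm) : STm :=
  t.subst (fun n => match n with | 0 => v | n+1 => .var n)

/-- Typing judgement for λτ. -/
inductive HasTy : List Ty → STm → Ty → Prop
  | var {Γ n τ} : Γ[n]? = some τ → HasTy Γ (.var n) τ
  | unit {Γ} : HasTy Γ .unit .unit
  | tt {Γ} : HasTy Γ .tt .bool
  | ff {Γ} : HasTy Γ .ff .bool
  | lam {Γ τ τ' t} : HasTy (τ :: Γ) t τ' → HasTy Γ (.lam τ t) (.arr τ τ')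
  | app {Γ t t' τ τ'} : HasTy Γ t (.arr τ' τ) → HasTy Γ t' τ' → HasTy Γ (.app t t') τ
  | pair {Γ t₁ t₂ τ₁ τ₂} : HasTy Γ t₁ τ₁ → HasTy Γ t₂ τ₂ → HasTy Γ (.pair t₁ t₂) (.prod τ₁ τ₂)
  | p1 {Γ t τ₁ τ₂} : HasTy Γ t (.prod τ₁ τ₂) → HasTy Γ (.p1 t) τ₁
  | p2 {Γ t τ₁ τ₂} : HasTy Γ t (.prod τ₁ τ₂) → HasTy Γ (.p2 t) τ₂
  | inl {Γ t τ₁ τ₂} : HasTy Γ t τ₁ → HasTy Γ (.inl t) (.sum τ₁ τ₂)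
  | inr {Γ t τ₁ τ₂} : HasTy Γ t τ₂ → HasTy Γ (.inr t) (.sum τ₁ τ₂)
  | caseOf {Γ t t₁ t₂ τ₁ τ₂ τ} : HasTy Γ t (.sum τ₁ τ₂) →
      HasTy (τ₁ :: Γ) t₁ τ → HasTy (τ₂ :: Γ) t₂ τ → HasTy Γ (.caseOf t t₁ t₂) τ
  | seq {Γ t₁ t₂ τ} : HasTy Γ t₁ .unit → HasTy Γ t₂ τ → HasTy Γ (.seq t₁ t₂) τ
  | tif {Γ t t₁ t₂ τ} : HasTy Γ t .bool → HasTy Γ t₁ τ → HasTy Γ t₂ τ →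
      HasTy Γ (.tif t t₁ t₂) τ
  | fixt {Γ t a b} : HasTy Γ t (.arr (.arr a b) (.arr a b)) → HasTy Γ (.fixt a b t) (.arr a b)

/-- Small-step CBV reduction for λτ (evaluation contexts are rendered as
congruence rules enforcing left-to-right call-by-value order). -/
inductive SStep : STm → STm → Prop
  | app1 {t₁ t₁' t₂} : SStep t₁ t₁' → SStep (.app t₁ t₂) (.app t₁' t₂)
  | app2 {v t t'} : SIsVal v → SStep t t' → SStep (.app v t) (.app v t')
  | beta {τ t v} : SIsVal v → SStep (.app (.lam τ t) v) (t.subst0 v)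
  | pair1 {t₁ t₁' t₂} : SStep t₁ t₁' → SStep (.pair t₁ t₂) (.pair t₁' t₂)
  | pair2 {v t t'} : SIsVal v → SStep t t' → SStep (.pair v t) (.pair v t')
  | p1C {t t'} : SStep t t' → SStep (.p1 t) (.p1 t')
  | p2C {t t'} : SStep t t' → SStep (.p2 t) (.p2 t')
  | p1V {v₁ v₂} : SIsVal v₁ → SIsVal v₂ → SStep (.p1 (.pair v₁ v₂)) v₁
  | p2V {v₁ v₂} : SIsVal v₁ → SIsVal v₂ → SStep (.p2 (.pair v₁ v₂)) v₂
  | inlC {t t'} : SStep t t' → SStep (.inl t) (.inl t')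
  | inrC {t t'} : SStep t t' → SStep (.inr t) (.inr t')
  | caseC {t t' t₁ t₂} : SStep t t' → SStep (.caseOf t t₁ t₂) (.caseOf t' t₁ t₂)
  | caseL {v t₁ t₂} : SIsVal v → SStep (.caseOf (.inl v) t₁ t₂) (t₁.subst0 v)
  | caseR {v t₁ t₂} : SIsVal v → SStep (.caseOf (.inr v) t₁ t₂) (t₂.subst0 v)
  | seqC {t₁ t₁' t₂} : SStep t₁ t₁' → SStep (.seq t₁ t₂) (.seq t₁' t₂)
  | seqN {t} : SStep (.seq .unit t) t
  | tifC {t t' t₁ t₂} : SStep t t' → SStep (.tif t t₁ t₂) (.tif t' t₁ t₂)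
  | tifT {t₁ t₂} : SStep (.tif .tt t₁ t₂) t₁
  | tifF {t₁ t₂} : SStep (.tif .ff t₁ t₂) t₂
  | fixC {a b t t'} : SStep t t' → SStep (.fixt a b t) (.fixt a b t')
  | fixBeta {a b t} :
      SStep (.fixt a b (.lam (.arr a b) t))
        (t.subst0 (.lam a (.app ((STm.fixt a b (.lam (.arr a b) t)).rename Nat.succ) (.var 0))))

def SStepN : ℕ → STm → STm → Prop
  | 0, t, t' => t = t'
  | n+1, t, t'' => ∃ t', SStep t t' ∧ SStepN n t' t''

def SStepStar (t t' : STm) : Prop := ∃ n, SStepN n t t'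

/-- termination with a value -/
def SHalts (t : STm) : Prop := ∃ n v, SStepN n t v ∧ SIsVal v

end FAC
/-! ## Target language λu : untyped CBV lambda calculus with `wrong` -/

namespace FAC

inductive UTm : Type
  | var (n : ℕ)
  | unit | tt | ff
  | lam (t : UTm)
  | app (t₁ t₂ : UTm)
  | pair (t₁ t₂ : UTm)
  | p1 (t : UTm)
  | p2 (t : UTm)
  | inl (t : UTm)
  | inr (t : UTm)
  | caseOf (t t₁ t₂ : UTm)
  | seq (t₁ t₂ : UTm)
  | tif (t t₁ t₂ : UTm)
  | wrong
deriving DecidableEq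

inductive UIsVal : UTm → Prop
  | unit : UIsVal .unit
  | tt : UIsVal .tt
  | ff : UIsVal .ff
  | lam {t} : UIsVal (.lam t)
  | pair {t₁ t₂} : UIsVal t₁ → UIsVal t₂ → UIsVal (.pair t₁ t₂)
  | inl {t} : UIsVal t → UIsVal (.inl t)
  | inr {t} : UIsVal t → UIsVal (.inr t)

def UTm.rename (f : ℕ → ℕ) : UTm → UTm
  | .var n => .var (f n)
  | .unit => .unit
  | .tt => .tt
  | .ff => .ff
  | .lam t => .lam (t.rename (liftR f))
  | .app a b => .app (a.rename f) (b.rename f)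
  | .pair a b => .pair (a.rename f) (b.rename f)
  | .p1 t => .p1 (t.rename f)
  | .p2 t => .p2 (t.rename f)
  | .inl t => .inl (t.rename f)
  | .inr t => .inr (t.rename f)
  | .caseOf t a b => .caseOf (t.rename f) (a.rename (liftR f)) (b.rename (liftR f))
  | .seq a b => .seq (a.rename f) (b.rename f)
  | .tif t a b => .tif (t.rename f) (a.rename f) (b.rename f)
  | .wrong => .wrong

def liftU (σ : ℕ → UTm) : ℕ → UTm
  | 0 => .var 0
  | n+1 => (σ n).rename Nat.succ

def UTm.subst (σ : ℕ → UTm) : UTm → UTm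
  | .var n => σ n
  | .unit => .unit
  | .tt => .tt
  | .ff => .ff
  | .lam t => .lam (t.subst (liftU σ))
  | .app a b => .app (a.subst σ) (b.subst σ)
  | .pair a b => .pair (a.subst σ) (b.subst σ)
  | .p1 t => .p1 (t.subst σ)
  | .p2 t => .p2 (t.subst σ)
  | .inl t => .inl (t.subst σ)
  | .inr t => .inr (t.subst σ)
  | .caseOf t a b => .caseOf (t.subst σ) (a.subst (liftU σ)) (b.subst (liftU σ))
  | .seq a b => .seq (a.subst σ) (b.subst σ)
  | .tif t a b => .tif (t.subst σ) (a.subst σ) (b.subst σ)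
  | .wrong => .wrong

def UTm.subst0 (t v : UTm) : UTm :=
  t.subst (fun n => match n with | 0 => v | n+1 => .var n)

/-- Well-scopedness: all free variables are `< n`. -/
def UTm.ws : UTm → ℕ → Prop
  | .var m, n => m < n
  | .unit, _ => True
  | .tt, _ => True
  | .ff, _ => True
  | .lam t, n => t.ws (n+1)
  | .app a b, n => a.ws n ∧ b.ws n
  | .pair a b, n => a.ws n ∧ b.ws n
  | .p1 t, n => t.ws n
  | .p2 t, n => t.ws n
  | .inl t, n => t.ws n
  | .inr t, n => t.ws n
  | .caseOf t a b, n => t.ws n ∧ a.ws (n+1) ∧ b.ws (n+1)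
  | .seq a b, n => a.ws n ∧ b.ws n
  | .tif t a b, n => t.ws n ∧ a.ws n ∧ b.ws n
  | .wrong, _ => True

/-- Small-step CBV reduction for λu, with propagation of `wrong` out of any
non-trivial evaluation context and ill-typed eliminations stepping to `wrong`. -/
inductive UStep : UTm → UTm → Prop
  | app1 {t₁ t₁' t₂} : UStep t₁ t₁' → UStep (.app t₁ t₂) (.app t₁' t₂)
  | app2 {v t t'} : UIsVal v → UStep t t' → UStep (.app v t) (.app v t')
  | beta {t v} : UIsVal v → UStep (.app (.lam t) v) (t.subst0 v)
  | appW1 {t} : UStep (.app .wrong t) .wrong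
  | appW2 {v} : UIsVal v → UStep (.app v .wrong) .wrong
  | appWrong {v₁ v₂} : UIsVal v₁ → UIsVal v₂ → (∀ t, v₁ ≠ .lam t) → UStep (.app v₁ v₂) .wrong
  | pair1 {t₁ t₁' t₂} : UStep t₁ t₁' → UStep (.pair t₁ t₂) (.pair t₁' t₂)
  | pair2 {v t t'} : UIsVal v → UStep t t' → UStep (.pair v t) (.pair v t')
  | pairW1 {t} : UStep (.pair .wrong t) .wrong
  | pairW2 {v} : UIsVal v → UStep (.pair v .wrong) .wrong
  | p1C {t t'} : UStep t t' → UStep (.p1 t) (.p1 t')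
  | p2C {t t'} : UStep t t' → UStep (.p2 t) (.p2 t')
  | p1W : UStep (.p1 .wrong) .wrong
  | p2W : UStep (.p2 .wrong) .wrong
  | p1V {v₁ v₂} : UIsVal v₁ → UIsVal v₂ → UStep (.p1 (.pair v₁ v₂)) v₁
  | p2V {v₁ v₂} : UIsVal v₁ → UIsVal v₂ → UStep (.p2 (.pair v₁ v₂)) v₂
  | p1Wrong {v} : UIsVal v → (∀ a b, v ≠ .pair a b) → UStep (.p1 v) .wrong
  | p2Wrong {v} : UIsVal v → (∀ a b, v ≠ .pair a b) → UStep (.p2 v) .wrong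
  | inlC {t t'} : UStep t t' → UStep (.inl t) (.inl t')
  | inrC {t t'} : UStep t t' → UStep (.inr t) (.inr t')
  | inlW : UStep (.inl .wrong) .wrong
  | inrW : UStep (.inr .wrong) .wrong
  | caseC {t t' t₁ t₂} : UStep t t' → UStep (.caseOf t t₁ t₂) (.caseOf t' t₁ t₂)
  | caseW {t₁ t₂} : UStep (.caseOf .wrong t₁ t₂) .wrong
  | caseL {v t₁ t₂} : UIsVal v → UStep (.caseOf (.inl v) t₁ t₂) (t₁.subst0 v)
  | caseR {v t₁ t₂} : UIsVal v → UStep (.caseOf (.inr v) t₁ t₂) (t₂.subst0 v)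
  | caseWrong {v t₁ t₂} : UIsVal v → (∀ w, v ≠ .inl w) → (∀ w, v ≠ .inr w) →
      UStep (.caseOf v t₁ t₂) .wrong
  | seqC {t₁ t₁' t₂} : UStep t₁ t₁' → UStep (.seq t₁ t₂) (.seq t₁' t₂)
  | seqW {t} : UStep (.seq .wrong t) .wrong
  | seqN {t} : UStep (.seq .unit t) t
  | seqWrong {v t} : UIsVal v → v ≠ .unit → UStep (.seq v t) .wrong
  | tifC {t t' t₁ t₂} : UStep t t' → UStep (.tif t t₁ t₂) (.tif t' t₁ t₂)
  | tifW {t₁ t₂} : UStep (.tif .wrong t₁ t₂) .wrong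
  | tifT {t₁ t₂} : UStep (.tif .tt t₁ t₂) t₁
  | tifF {t₁ t₂} : UStep (.tif .ff t₁ t₂) t₂
  | tifWrong {v t₁ t₂} : UIsVal v → v ≠ .tt → v ≠ .ff → UStep (.tif v t₁ t₂) .wrong

def UStepN : ℕ → UTm → UTm → Prop
  | 0, t, t' => t = t'
  | n+1, t, t'' => ∃ t', UStep t t' ∧ UStepN n t' t''

def UStepStar (t t' : UTm) : Prop := ∃ n, UStepN n t t'

def UStepPlus (t t' : UTm) : Prop := ∃ n, 0 < n ∧ UStepN n t t'

/-- termination with a value (`wrong` is not a value) -/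
def UHalts (t : UTm) : Prop := ∃ n v, UStepN n t v ∧ UIsVal v

end FAC
/-! ## Type erasure and the Z combinator -/

namespace FAC

/-- the Z (call-by-value Y) combinator: `λf.(λx. f (λy. x x y)) (λx. f (λy. x x y))` -/
def Zcomb : UTm :=
  .lam (.app
    (.lam (.app (.var 1) (.lam (.app (.app (.var 1) (.var 1)) (.var 0)))))
    (.lam (.app (.var 1) (.lam (.app (.app (.var 1) (.var 1)) (.var 0))))))

/-- `λx. f (λy. x x y)`, for a given (closed) `f` -/
def gOf (f : UTm) : UTm :=
  .lam (.app (f.rename Nat.succ) (.lam (.app (.app (.var 1) (.var 1)) (.var 0))))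

/-- Type erasure from λτ to λu; `fix` is mapped to the Z combinator. -/
def erase : STm → UTm
  | .var n => .var n
  | .unit => .unit
  | .tt => .tt
  | .ff => .ff
  | .lam _ t => .lam (erase t)
  | .app a b => .app (erase a) (erase b)
  | .pair a b => .pair (erase a) (erase b)
  | .p1 t => .p1 (erase t)
  | .p2 t => .p2 (erase t)
  | .inl t => .inl (erase t)
  | .inr t => .inr (erase t)
  | .caseOf t a b => .caseOf (erase t) (erase a) (erase b)
  | .seq a b => .seq (erase a) (erase b)
  | .tif t a b => .tif (erase t) (erase a) (erase b)
  | .fixt _ _ t => .app Zcomb (erase t)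

/-! ## Dynamic type-checking wrappers protect/confine -/

/-- `wrap τ true = protect_τ`, `wrap τ false = confine_τ`. -/
def wrap : Ty → Bool → UTm
  | .unit, true => .lam (.var 0)
  | .bool, true => .lam (.var 0)
  | .unit, false => .lam (.seq (.var 0) .unit)
  | .bool, false => .lam (.tif (.var 0) .tt .ff)
  | .prod a b, p => .lam (.pair (.app (wrap a p) (.p1 (.var 0))) (.app (wrap b p) (.p2 (.var 0))))
  | .sum a b, p => .lam (.caseOf (.var 0)
      (.inl (.app (wrap a p) (.var 0)))
      (.inr (.app (wrap b p) (.var 0))))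
  | .arr a b, p => .lam (.lam (.app (wrap b p) (.app (.var 1) (.app (wrap a (!p)) (.var 0)))))

def protect (τ : Ty) : UTm := wrap τ true
def confine (τ : Ty) : UTm := wrap τ false

/-- the compiler: protect the erased term -/
def compile (τ : Ty) (t : STm) : UTm := .app (protect τ) (erase t)

/-! ## UVal and its tools -/

/-- the family of λτ types UVal_n -/
def UValTy : ℕ → Ty
  | 0 => .unit
  | n+1 => .sum .unit (.sum .unit (.sum .bool (.sum (.prod (UValTy n) (UValTy n))
      (.sum (.sum (UValTy n) (UValTy n)) (.arr (UValTy n) (UValTy n))))))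

def inUnk : STm := .inl .unit
def inUnit (v : STm) : STm := .inr (.inl v)
def inBool (v : STm) : STm := .inr (.inr (.inl v))
def inProd (v : STm) : STm := .inr (.inr (.inr (.inl v)))
def inSum (v : STm) : STm := .inr (.inr (.inr (.inr (.inl v))))
def inArr (v : STm) : STm := .inr (.inr (.inr (.inr (.inr v))))

def unkUVal : ℕ → STm
  | 0 => .unit
  | _+1 => inUnk

/-- the diverging term `omega_τ = fix_{Unit→τ} (λx:Unit→τ. x) unit` -/
def omegaTm (τ : Ty) : STm :=
  .app (.fixt .unit τ (.lam (.arr .unit τ) (.var 0))) .unit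

/-- `caseUVal_{Unit;n} : UVal_{n+1} → Unit` -/
def caseUnitU (n : ℕ) : STm :=
  .lam (UValTy (n+1)) (.caseOf (.var 0) (omegaTm .unit)
    (.caseOf (.var 0) (.var 0) (omegaTm .unit)))

def caseBoolU (n : ℕ) : STm :=
  .lam (UValTy (n+1)) (.caseOf (.var 0) (omegaTm .bool)
    (.caseOf (.var 0) (omegaTm .bool)
      (.caseOf (.var 0) (.var 0) (omegaTm .bool))))

def caseProdU (n : ℕ) : STm :=
  .lam (UValTy (n+1)) (.caseOf (.var 0) (omegaTm (.prod (UValTy n) (UValTy n)))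
    (.caseOf (.var 0) (omegaTm (.prod (UValTy n) (UValTy n)))
      (.caseOf (.var 0) (omegaTm (.prod (UValTy n) (UValTy n)))
        (.caseOf (.var 0) (.var 0) (omegaTm (.prod (UValTy n) (UValTy n)))))))

def caseSumU (n : ℕ) : STm :=
  .lam (UValTy (n+1)) (.caseOf (.var 0) (omegaTm (.sum (UValTy n) (UValTy n)))
    (.caseOf (.var 0) (omegaTm (.sum (UValTy n) (UValTy n)))
      (.caseOf (.var 0) (omegaTm (.sum (UValTy n) (UValTy n)))
        (.caseOf (.var 0) (omegaTm (.sum (UValTy n) (UValTy n)))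
          (.caseOf (.var 0) (.var 0) (omegaTm (.sum (UValTy n) (UValTy n))))))))

/-- `caseUVal_{→;n} : UVal_{n+1} → UVal_n → UVal_n` -/
def caseArrU (n : ℕ) : STm :=
  .lam (UValTy (n+1)) (.lam (UValTy n)
    (.caseOf (.var 1) (omegaTm (UValTy n))
      (.caseOf (.var 0) (omegaTm (UValTy n))
        (.caseOf (.var 0) (omegaTm (UValTy n))
          (.caseOf (.var 0) (omegaTm (UValTy n))
            (.caseOf (.var 0) (omegaTm (UValTy n))
              (.app (.var 0) (.var 5))))))))

/-- `updown d true n = upgrade_{n;d} : UVal_n → UVal_{n+d}`,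
    `updown d false n = downgrade_{n;d} : UVal_{n+d} → UVal_n`. -/
def updown (d : ℕ) : Bool → ℕ → STm
  | up, 0 => if up then .lam (UValTy 0) (unkUVal d) else .lam (UValTy d) (unkUVal 0)
  | up, n+1 =>
    let sm := updown d up n
    let op := updown d (!up) n
    let aTy := if up then UValTy (n+1) else UValTy (n+d+1)
    let zTy := if up then UValTy (n+d) else UValTy n
    .lam aTy (.caseOf (.var 0) inUnk
      (.caseOf (.var 0) (inUnit (.var 0))
        (.caseOf (.var 0) (inBool (.var 0))
          (.caseOf (.var 0)
            (inProd (.pair (.app sm (.p1 (.var 0))) (.app sm (.p2 (.var 0)))))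
            (.caseOf (.var 0)
              (inSum (.caseOf (.var 0) (.inl (.app sm (.var 0))) (.inr (.app sm (.var 0)))))
              (inArr (.lam zTy (.app sm (.app (.var 1) (.app op (.var 0)))))))))))

def upgrade (n d : ℕ) : STm := updown d true n
def downgrade (n d : ℕ) : STm := updown d false n

/-! ## inject / extract -/

/-- `(injext n τ).1 = inject_{τ;n} : τ → UVal_n` and
    `(injext n τ).2 = extract_{τ;n} : UVal_n → τ`. -/
def injext : ℕ → Ty → STm × STm
  | 0, τ => (.lam τ (omegaTm (UValTy 0)), .lam (UValTy 0) (omegaTm τ))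
  | n+1, τ =>
    match τ with
    | .unit => (.lam .unit (inUnit (.var 0)), caseUnitU n)
    | .bool => (.lam .bool (inBool (.var 0)), caseBoolU n)
    | .prod a b =>
      (.lam (.prod a b) (inProd (.pair
          (.app (injext n a).1 (.p1 (.var 0)))
          (.app (injext n b).1 (.p2 (.var 0))))),
       .lam (UValTy (n+1)) (.pair
          (.app (injext n a).2 (.p1 (.app (caseProdU n) (.var 0))))
          (.app (injext n b).2 (.p2 (.app (caseProdU n) (.var 0))))))
    | .sum a b =>
      (.lam (.sum a b) (inSum (.caseOf (.var 0)
          (.inl (.app (injext n a).1 (.var 0)))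
          (.inr (.app (injext n b).1 (.var 0))))),
       .lam (UValTy (n+1)) (.caseOf (.app (caseSumU n) (.var 0))
          (.inl (.app (injext n a).2 (.var 0)))
          (.inr (.app (injext n b).2 (.var 0)))))
    | .arr a b =>
      (.lam (.arr a b) (inArr (.lam (UValTy n)
          (.app (injext n b).1 (.app (.var 1) (.app (injext n a).2 (.var 0)))))),
       .lam (UValTy (n+1)) (.lam a
          (.app (injext n b).2
            (.app (.app (caseArrU n) (.var 1)) (.app (injext n a).1 (.var 0))))))

def injectTm (n : ℕ) (τ : Ty) : STm := (injext n τ).1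
def extractTm (n : ℕ) (τ : Ty) : STm := (injext n τ).2

end FAC
/-! ## Emulation of λu terms in UVal_n -/

namespace FAC

/-- `emulate n t̲` : the approximate back-translation of a λu term into a λτ term
of type `UVal_n`. -/
def emulate (n : ℕ) : UTm → STm
  | .var i => .var i
  | .unit => .app (downgrade n 1) (inUnit .unit)
  | .tt => .app (downgrade n 1) (inBool .tt)
  | .ff => .app (downgrade n 1) (inBool .ff)
  | .lam t => .app (downgrade n 1) (inArr (.lam (UValTy n) (emulate n t)))
  | .app t₁ t₂ =>
      .app (.app (caseArrU n) (.app (upgrade n 1) (emulate n t₁))) (emulate n t₂)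
  | .pair t₁ t₂ => .app (downgrade n 1) (inProd (.pair (emulate n t₁) (emulate n t₂)))
  | .p1 t => .p1 (.app (caseProdU n) (.app (upgrade n 1) (emulate n t)))
  | .p2 t => .p2 (.app (caseProdU n) (.app (upgrade n 1) (emulate n t)))
  | .inl t => .app (downgrade n 1) (inSum (.inl (emulate n t)))
  | .inr t => .app (downgrade n 1) (inSum (.inr (emulate n t)))
  | .caseOf t t₁ t₂ =>
      .caseOf (.app (caseSumU n) (.app (upgrade n 1) (emulate n t)))
        (emulate n t₁) (emulate n t₂)
  | .seq t₁ t₂ => .seq (.app (caseUnitU n) (.app (upgrade n 1) (emulate n t₁))) (emulate n t₂)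
  | .tif t t₁ t₂ =>
      .tif (.app (caseBoolU n) (.app (upgrade n 1) (emulate n t)))
        (emulate n t₁) (emulate n t₂)
  | .wrong => omegaTm (UValTy n)

/-! ## Pseudo-types -/

inductive Prec : Type
  | precise | imprecise
deriving DecidableEq

/-- pseudo-types: λτ types together with the token type `EmulDV_{n;p}` -/
inductive PTy : Type
  | unit : PTy
  | bool : PTy
  | arr (a b : PTy) : PTy
  | prod (a b : PTy) : PTy
  | sum (a b : PTy) : PTy
  | emul (n : ℕ) (p : Prec) : PTy
deriving DecidableEq

/-- conversion of pseudo-types to λτ types: `EmulDV_{n;p}` becomes `UVal_n` -/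
def repEmul : PTy → Ty
  | .unit => .unit
  | .bool => .bool
  | .arr a b => .arr (repEmul a) (repEmul b)
  | .prod a b => .prod (repEmul a) (repEmul b)
  | .sum a b => .sum (repEmul a) (repEmul b)
  | .emul n _ => UValTy n

/-- embedding of λτ types into pseudo-types -/
def Ty.toP : Ty → PTy
  | .unit => .unit
  | .bool => .bool
  | .arr a b => .arr a.toP b.toP
  | .prod a b => .prod a.toP b.toP
  | .sum a b => .sum a.toP b.toP

def PTy.weight : PTy → ℕ
  | .unit => 1
  | .bool => 1
  | .arr a b => a.weight + b.weight + 1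
  | .prod a b => a.weight + b.weight + 1
  | .sum a b => a.weight + b.weight + 1
  | .emul n _ => 2 * 3 ^ n

/-! ## Evaluation contexts -/

inductive SEC : Type
  | hole
  | appL (C : SEC) (t : STm)
  | appR (v : STm) (C : SEC)
  | pairL (C : SEC) (t : STm)
  | pairR (v : STm) (C : SEC)
  | p1 (C : SEC)
  | p2 (C : SEC)
  | inl (C : SEC)
  | inr (C : SEC)
  | caseOf (C : SEC) (t₁ t₂ : STm)
  | seq (C : SEC) (t : STm)
  | tif (C : SEC) (t₁ t₂ : STm)
  | fixt (a b : Ty) (C : SEC)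

def SEC.ok : SEC → Prop
  | .hole => True
  | .appL C _ => C.ok
  | .appR v C => SIsVal v ∧ C.ok
  | .pairL C _ => C.ok
  | .pairR v C => SIsVal v ∧ C.ok
  | .p1 C => C.ok
  | .p2 C => C.ok
  | .inl C => C.ok
  | .inr C => C.ok
  | .caseOf C _ _ => C.ok
  | .seq C _ => C.ok
  | .tif C _ _ => C.ok
  | .fixt _ _ C => C.ok

def SEC.plug : SEC → STm → STm
  | .hole, t => t
  | .appL C u, t => .app (C.plug t) u
  | .appR v C, t => .app v (C.plug t)
  | .pairL C u, t => .pair (C.plug t) u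
  | .pairR v C, t => .pair v (C.plug t)
  | .p1 C, t => .p1 (C.plug t)
  | .p2 C, t => .p2 (C.plug t)
  | .inl C, t => .inl (C.plug t)
  | .inr C, t => .inr (C.plug t)
  | .caseOf C a b, t => .caseOf (C.plug t) a b
  | .seq C u, t => .seq (C.plug t) u
  | .tif C a b, t => .tif (C.plug t) a b
  | .fixt a b C, t => .fixt a b (C.plug t)

inductive UEC : Type
  | hole
  | appL (C : UEC) (t : UTm)
  | appR (v : UTm) (C : UEC)
  | pairL (C : UEC) (t : UTm)
  | pairR (v : UTm) (C : UEC)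
  | p1 (C : UEC)
  | p2 (C : UEC)
  | inl (C : UEC)
  | inr (C : UEC)
  | caseOf (C : UEC) (t₁ t₂ : UTm)
  | seq (C : UEC) (t : UTm)
  | tif (C : UEC) (t₁ t₂ : UTm)

def UEC.ok : UEC → Prop
  | .hole => True
  | .appL C _ => C.ok
  | .appR v C => UIsVal v ∧ C.ok
  | .pairL C _ => C.ok
  | .pairR v C => UIsVal v ∧ C.ok
  | .p1 C => C.ok
  | .p2 C => C.ok
  | .inl C => C.ok
  | .inr C => C.ok
  | .caseOf C _ _ => C.ok
  | .seq C _ => C.ok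
  | .tif C _ _ => C.ok

def UEC.plug : UEC → UTm → UTm
  | .hole, t => t
  | .appL C u, t => .app (C.plug t) u
  | .appR v C, t => .app v (C.plug t)
  | .pairL C u, t => .pair (C.plug t) u
  | .pairR v C, t => .pair v (C.plug t)
  | .p1 C, t => .p1 (C.plug t)
  | .p2 C, t => .p2 (C.plug t)
  | .inl C, t => .inl (C.plug t)
  | .inr C, t => .inr (C.plug t)
  | .caseOf C a b, t => .caseOf (C.plug t) a b
  | .seq C u, t => .seq (C.plug t) u
  | .tif C a b, t => .tif (C.plug t) a b

end FAC
/-! ## The step-indexed, asymmetric, cross-language logical relations -/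

namespace FAC

/-- direction of approximation: `lt` is ≲ and `gt` is ≳ -/
inductive Dir : Type
  | lt | gt
deriving DecidableEq

/-- the observation relation `O(W)_□` on worlds `W = (k)` -/
def Obs (dir : Dir) (k : ℕ) (ts : STm) (tu : UTm) : Prop :=
  match dir with
  | .lt => (∃ m ≤ k, ∃ v, SStepN m ts v ∧ SIsVal v) → UHalts tu
  | .gt => (∃ m ≤ k, ∃ v, UStepN m tu v ∧ UIsVal v) → SHalts ts

/-- The value relation `(W, vs, vu) ∈ V⟦τ̂⟧_dir`, defined by well-founded
recursion on the lexicographic pair (world level, weight of the pseudo-type).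
The term and continuation relations of the biorthogonal definition are
inlined at the recursive occurrences. -/
def ValRel (dir : Dir) (k : ℕ) (τ : PTy) (vs : STm) (vu : UTm) : Prop :=
  match τ with
  | .unit => HasTy [] vs .unit ∧ vu.ws 0 ∧ vs = .unit ∧ vu = .unit
  | .bool => HasTy [] vs .bool ∧ vu.ws 0 ∧
      ((vs = .tt ∧ vu = .tt) ∨ (vs = .ff ∧ vu = .ff))
  | .prod a b =>
      HasTy [] vs (repEmul (.prod a b)) ∧ vu.ws 0 ∧
      ∃ v₁ v₂ u₁ u₂, vs = .pair v₁ v₂ ∧ vu = .pair u₁ u₂ ∧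
        SIsVal v₁ ∧ SIsVal v₂ ∧ UIsVal u₁ ∧ UIsVal u₂ ∧
        (∀ j, j + 1 ≤ k → ValRel dir j a v₁ u₁ ∧ ValRel dir j b v₂ u₂)
  | .sum a b =>
      HasTy [] vs (repEmul (.sum a b)) ∧ vu.ws 0 ∧
      ((∃ v u, vs = .inl v ∧ vu = .inl u ∧ SIsVal v ∧ UIsVal u ∧
          (∀ j, j + 1 ≤ k → ValRel dir j a v u)) ∨
       (∃ v u, vs = .inr v ∧ vu = .inr u ∧ SIsVal v ∧ UIsVal u ∧
          (∀ j, j + 1 ≤ k → ValRel dir j b v u)))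
  | .arr a b =>
      HasTy [] vs (repEmul (.arr a b)) ∧ vu.ws 0 ∧
      ∃ ts tu, vs = .lam (repEmul a) ts ∧ vu = .lam tu ∧
        ∀ j, j < k → ∀ vs' vu', SIsVal vs' → UIsVal vu' → ValRel dir j a vs' vu' →
          -- inlined term relation at type b, world j
          ∀ Cs Cu, SEC.ok Cs → UEC.ok Cu →
            (∀ i, i ≤ j → ∀ ws wu, SIsVal ws → UIsVal wu → ValRel dir i b ws wu →
              Obs dir i (Cs.plug ws) (Cu.plug wu)) →
            Obs dir j (Cs.plug (ts.subst0 vs')) (Cu.plug (tu.subst0 vu'))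
  | .emul 0 p => HasTy [] vs (UValTy 0) ∧ vu.ws 0 ∧ vs = .unit ∧ p = .imprecise
  | .emul (n+1) p =>
      HasTy [] vs (UValTy (n+1)) ∧ vu.ws 0 ∧
      ((vs = inUnk ∧ p = .imprecise) ∨
       (∃ v, vs = inUnit v ∧ ValRel dir k .unit v vu) ∨
       (∃ v, vs = inBool v ∧ ValRel dir k .bool v vu) ∨
       (∃ v, vs = inProd v ∧ ValRel dir k (.prod (.emul n p) (.emul n p)) v vu) ∨
       (∃ v, vs = inSum v ∧ ValRel dir k (.sum (.emul n p) (.emul n p)) v vu) ∨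
       (∃ v, vs = inArr v ∧ ValRel dir k (.arr (.emul n p) (.emul n p)) v vu))
termination_by (k, τ.weight)
decreasing_by
  all_goals simp_wf
  all_goals try (exact Prod.Lex.left _ _ (by omega))
  all_goals
    refine Prod.Lex.right _ ?_
  all_goals simp [PTy.weight, pow_succ]
  all_goals nlinarith [Nat.one_le_two_pow (n := n), Nat.one_le_pow n 3 (by omega)]

end FAC
namespace FAC

/-- continuation (evaluation-context) relation: biorthogonality -/
def ContRel (dir : Dir) (k : ℕ) (τ : PTy) (Cs : SEC) (Cu : UEC) : Prop :=
  Cs.ok ∧ Cu.ok ∧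
  ∀ i, i ≤ k → ∀ vs vu, SIsVal vs → UIsVal vu → ValRel dir i τ vs vu →
    Obs dir i (Cs.plug vs) (Cu.plug vu)

/-- term relation -/
def TermRel (dir : Dir) (k : ℕ) (τ : PTy) (t : STm) (u : UTm) : Prop :=
  ∀ Cs Cu, ContRel dir k τ Cs Cu → Obs dir k (Cs.plug t) (Cu.plug u)

/-- relation on closing substitutions instantiating a pseudo-context -/
def EnvRel (dir : Dir) (k : ℕ) (Γ : List PTy) (γs : ℕ → STm) (γu : ℕ → UTm) : Prop :=
  ∀ i τ, Γ[i]? = some τ →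
    SIsVal (γs i) ∧ UIsVal (γu i) ∧ ValRel dir k τ (γs i) (γu i)

/-- the logical relation `Γ̂ ⊢ t □ₙ t̲ : τ̂` on open terms, up to `n` steps -/
def LogRelN (dir : Dir) (n : ℕ) (Γ : List PTy) (t : STm) (u : UTm) (τ : PTy) : Prop :=
  HasTy (Γ.map repEmul) t (repEmul τ) ∧ u.ws Γ.length ∧
  ∀ k, k ≤ n → ∀ γs γu, EnvRel dir k Γ γs γu →
    TermRel dir k τ (t.subst γs) (u.subst γu)

/-- `Γ̂ ⊢ t □ t̲ : τ̂` : related up to any number of steps -/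
def LogRel (dir : Dir) (Γ : List PTy) (t : STm) (u : UTm) (τ : PTy) : Prop :=
  ∀ n, LogRelN dir n Γ t u τ

/-! ## Program contexts -/

inductive SPC : Type
  | hole
  | lam (τ : Ty) (C : SPC)
  | appL (C : SPC) (t : STm)
  | appR (t : STm) (C : SPC)
  | pairL (C : SPC) (t : STm)
  | pairR (t : STm) (C : SPC)
  | p1 (C : SPC)
  | p2 (C : SPC)
  | inl (C : SPC)
  | inr (C : SPC)
  | caseS (C : SPC) (t₁ t₂ : STm)
  | caseL (t : STm) (C : SPC) (t₂ : STm)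
  | caseR (t t₁ : STm) (C : SPC)
  | seqL (C : SPC) (t : STm)
  | seqR (t : STm) (C : SPC)
  | tifC (C : SPC) (t₁ t₂ : STm)
  | tifT (t : STm) (C : SPC) (t₂ : STm)
  | tifF (t t₁ : STm) (C : SPC)
  | fixt (a b : Ty) (C : SPC)

def SPC.plug : SPC → STm → STm
  | .hole, t => t
  | .lam τ C, t => .lam τ (C.plug t)
  | .appL C u, t => .app (C.plug t) u
  | .appR u C, t => .app u (C.plug t)
  | .pairL C u, t => .pair (C.plug t) u
  | .pairR u C, t => .pair u (C.plug t)
  | .p1 C, t => .p1 (C.plug t)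
  | .p2 C, t => .p2 (C.plug t)
  | .inl C, t => .inl (C.plug t)
  | .inr C, t => .inr (C.plug t)
  | .caseS C a b, t => .caseOf (C.plug t) a b
  | .caseL u C b, t => .caseOf u (C.plug t) b
  | .caseR u a C, t => .caseOf u a (C.plug t)
  | .seqL C u, t => .seq (C.plug t) u
  | .seqR u C, t => .seq u (C.plug t)
  | .tifC C a b, t => .tif (C.plug t) a b
  | .tifT u C b, t => .tif u (C.plug t) b
  | .tifF u a C, t => .tif u a (C.plug t)
  | .fixt a b C, t => .fixt a b (C.plug t)

/-- context typing `⊢ C : (Γ',τ') → (Γ,τ)` -/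
inductive SPCTy : SPC → List Ty → Ty → List Ty → Ty → Prop
  | hole {Γ τ} : SPCTy .hole Γ τ Γ τ
  | lam {C Γ' τ' Γ σ τ} : SPCTy C Γ' τ' (σ :: Γ) τ → SPCTy (.lam σ C) Γ' τ' Γ (.arr σ τ)
  | appL {C Γ' τ' Γ a b t} : SPCTy C Γ' τ' Γ (.arr a b) → HasTy Γ t a →
      SPCTy (.appL C t) Γ' τ' Γ b
  | appR {C Γ' τ' Γ a b t} : HasTy Γ t (.arr a b) → SPCTy C Γ' τ' Γ a →
      SPCTy (.appR t C) Γ' τ' Γ b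
  | pairL {C Γ' τ' Γ a b t} : SPCTy C Γ' τ' Γ a → HasTy Γ t b →
      SPCTy (.pairL C t) Γ' τ' Γ (.prod a b)
  | pairR {C Γ' τ' Γ a b t} : HasTy Γ t a → SPCTy C Γ' τ' Γ b →
      SPCTy (.pairR t C) Γ' τ' Γ (.prod a b)
  | p1 {C Γ' τ' Γ a b} : SPCTy C Γ' τ' Γ (.prod a b) → SPCTy (.p1 C) Γ' τ' Γ a
  | p2 {C Γ' τ' Γ a b} : SPCTy C Γ' τ' Γ (.prod a b) → SPCTy (.p2 C) Γ' τ' Γ b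
  | inl {C Γ' τ' Γ a b} : SPCTy C Γ' τ' Γ a → SPCTy (.inl C) Γ' τ' Γ (.sum a b)
  | inr {C Γ' τ' Γ a b} : SPCTy C Γ' τ' Γ b → SPCTy (.inr C) Γ' τ' Γ (.sum a b)
  | caseS {C Γ' τ' Γ a b τ t₁ t₂} : SPCTy C Γ' τ' Γ (.sum a b) →
      HasTy (a :: Γ) t₁ τ → HasTy (b :: Γ) t₂ τ → SPCTy (.caseS C t₁ t₂) Γ' τ' Γ τ
  | caseL {C Γ' τ' Γ a b τ t t₂} : HasTy Γ t (.sum a b) →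
      SPCTy C Γ' τ' (a :: Γ) τ → HasTy (b :: Γ) t₂ τ → SPCTy (.caseL t C t₂) Γ' τ' Γ τ
  | caseR {C Γ' τ' Γ a b τ t t₁} : HasTy Γ t (.sum a b) →
      HasTy (a :: Γ) t₁ τ → SPCTy C Γ' τ' (b :: Γ) τ → SPCTy (.caseR t t₁ C) Γ' τ' Γ τ
  | seqL {C Γ' τ' Γ τ t} : SPCTy C Γ' τ' Γ .unit → HasTy Γ t τ →
      SPCTy (.seqL C t) Γ' τ' Γ τ
  | seqR {C Γ' τ' Γ τ t} : HasTy Γ t .unit → SPCTy C Γ' τ' Γ τ →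
      SPCTy (.seqR t C) Γ' τ' Γ τ
  | tifC {C Γ' τ' Γ τ t₁ t₂} : SPCTy C Γ' τ' Γ .bool → HasTy Γ t₁ τ → HasTy Γ t₂ τ →
      SPCTy (.tifC C t₁ t₂) Γ' τ' Γ τ
  | tifT {C Γ' τ' Γ τ t t₂} : HasTy Γ t .bool → SPCTy C Γ' τ' Γ τ → HasTy Γ t₂ τ →
      SPCTy (.tifT t C t₂) Γ' τ' Γ τ
  | tifF {C Γ' τ' Γ τ t t₁} : HasTy Γ t .bool → HasTy Γ t₁ τ → SPCTy C Γ' τ' Γ τ →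
      SPCTy (.tifF t t₁ C) Γ' τ' Γ τ
  | fixt {C Γ' τ' Γ a b} : SPCTy C Γ' τ' Γ (.arr (.arr a b) (.arr a b)) →
      SPCTy (.fixt a b C) Γ' τ' Γ (.arr a b)

inductive UPC : Type
  | hole
  | lam (C : UPC)
  | appL (C : UPC) (t : UTm)
  | appR (t : UTm) (C : UPC)
  | pairL (C : UPC) (t : UTm)
  | pairR (t : UTm) (C : UPC)
  | p1 (C : UPC)
  | p2 (C : UPC)
  | inl (C : UPC)
  | inr (C : UPC)
  | caseS (C : UPC) (t₁ t₂ : UTm)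
  | caseL (t : UTm) (C : UPC) (t₂ : UTm)
  | caseR (t t₁ : UTm) (C : UPC)
  | seqL (C : UPC) (t : UTm)
  | seqR (t : UTm) (C : UPC)
  | tifC (C : UPC) (t₁ t₂ : UTm)
  | tifT (t : UTm) (C : UPC) (t₂ : UTm)
  | tifF (t t₁ : UTm) (C : UPC)

def UPC.plug : UPC → UTm → UTm
  | .hole, t => t
  | .lam C, t => .lam (C.plug t)
  | .appL C u, t => .app (C.plug t) u
  | .appR u C, t => .app u (C.plug t)
  | .pairL C u, t => .pair (C.plug t) u
  | .pairR u C, t => .pair u (C.plug t)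
  | .p1 C, t => .p1 (C.plug t)
  | .p2 C, t => .p2 (C.plug t)
  | .inl C, t => .inl (C.plug t)
  | .inr C, t => .inr (C.plug t)
  | .caseS C a b, t => .caseOf (C.plug t) a b
  | .caseL u C b, t => .caseOf u (C.plug t) b
  | .caseR u a C, t => .caseOf u a (C.plug t)
  | .seqL C u, t => .seq (C.plug t) u
  | .seqR u C, t => .seq u (C.plug t)
  | .tifC C a b, t => .tif (C.plug t) a b
  | .tifT u C b, t => .tif u (C.plug t) b
  | .tifF u a C, t => .tif u a (C.plug t)

/-- `UPCWs C m n` : context `C` maps terms with `m` free variables (the hole's scope)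
to terms with `n` free variables (`⊢ C : m → n`). -/
inductive UPCWs : UPC → ℕ → ℕ → Prop
  | hole {n} : UPCWs .hole n n
  | lam {C m n} : UPCWs C m (n+1) → UPCWs (.lam C) m n
  | appL {C m n t} : UPCWs C m n → UTm.ws t n → UPCWs (.appL C t) m n
  | appR {C m n t} : UTm.ws t n → UPCWs C m n → UPCWs (.appR t C) m n
  | pairL {C m n t} : UPCWs C m n → UTm.ws t n → UPCWs (.pairL C t) m n
  | pairR {C m n t} : UTm.ws t n → UPCWs C m n → UPCWs (.pairR t C) m n
  | p1 {C m n} : UPCWs C m n → UPCWs (.p1 C) m n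
  | p2 {C m n} : UPCWs C m n → UPCWs (.p2 C) m n
  | inl {C m n} : UPCWs C m n → UPCWs (.inl C) m n
  | inr {C m n} : UPCWs C m n → UPCWs (.inr C) m n
  | caseS {C m n t₁ t₂} : UPCWs C m n → UTm.ws t₁ (n+1) → UTm.ws t₂ (n+1) →
      UPCWs (.caseS C t₁ t₂) m n
  | caseL {C m n t t₂} : UTm.ws t n → UPCWs C m (n+1) → UTm.ws t₂ (n+1) →
      UPCWs (.caseL t C t₂) m n
  | caseR {C m n t t₁} : UTm.ws t n → UTm.ws t₁ (n+1) → UPCWs C m (n+1) →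
      UPCWs (.caseR t t₁ C) m n
  | seqL {C m n t} : UPCWs C m n → UTm.ws t n → UPCWs (.seqL C t) m n
  | seqR {C m n t} : UTm.ws t n → UPCWs C m n → UPCWs (.seqR t C) m n
  | tifC {C m n t₁ t₂} : UPCWs C m n → UTm.ws t₁ n → UTm.ws t₂ n →
      UPCWs (.tifC C t₁ t₂) m n
  | tifT {C m n t t₂} : UTm.ws t n → UPCWs C m n → UTm.ws t₂ n →
      UPCWs (.tifT t C t₂) m n
  | tifF {C m n t t₁} : UTm.ws t n → UTm.ws t₁ n → UPCWs C m n →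
      UPCWs (.tifF t t₁ C) m n

/-! ## Contextual equivalence -/

/-- `t₁ ≃ctx t₂ : τ` in λτ (for closed terms) -/
def SCtxEq (t₁ t₂ : STm) (τ : Ty) : Prop :=
  ∀ C τ', SPCTy C [] τ [] τ' → (SHalts (C.plug t₁) ↔ SHalts (C.plug t₂))

/-- `t̲₁ ≃ctx t̲₂` in λu (for closed terms) -/
def UCtxEq (u₁ u₂ : UTm) : Prop :=
  ∀ C, UPCWs C 0 0 → (UHalts (C.plug u₁) ↔ UHalts (C.plug u₂))

/-! ## Emulation of λu program contexts -/

/-- `emulateC n C̲` : back-translation of a λu program context into a λτ program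
context with hole of type `UVal_n`. -/
def emulateC (n : ℕ) : UPC → SPC
  | .hole => .hole
  | .lam C => .appR (downgrade n 1)
      (.inr (.inr (.inr (.inr (.inr (.lam (UValTy n) (emulateC n C)))))))
  | .appL C t => .appL (.appR (caseArrU n) (.appR (upgrade n 1) (emulateC n C))) (emulate n t)
  | .appR t C => .appR (.app (caseArrU n) (.app (upgrade n 1) (emulate n t))) (emulateC n C)
  | .pairL C t => .appR (downgrade n 1)
      (.inr (.inr (.inr (.inl (.pairL (emulateC n C) (emulate n t))))))
  | .pairR t C => .appR (downgrade n 1)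
      (.inr (.inr (.inr (.inl (.pairR (emulate n t) (emulateC n C))))))
  | .p1 C => .p1 (.appR (caseProdU n) (.appR (upgrade n 1) (emulateC n C)))
  | .p2 C => .p2 (.appR (caseProdU n) (.appR (upgrade n 1) (emulateC n C)))
  | .inl C => .appR (downgrade n 1) (.inr (.inr (.inr (.inr (.inl (.inl (emulateC n C)))))))
  | .inr C => .appR (downgrade n 1) (.inr (.inr (.inr (.inr (.inl (.inr (emulateC n C)))))))
  | .caseS C t₁ t₂ => .caseS (.appR (caseSumU n) (.appR (upgrade n 1) (emulateC n C)))
      (emulate n t₁) (emulate n t₂)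
  | .caseL t C t₂ => .caseL (.app (caseSumU n) (.app (upgrade n 1) (emulate n t)))
      (emulateC n C) (emulate n t₂)
  | .caseR t t₁ C => .caseR (.app (caseSumU n) (.app (upgrade n 1) (emulate n t)))
      (emulate n t₁) (emulateC n C)
  | .seqL C t => .seqL (.appR (caseUnitU n) (.appR (upgrade n 1) (emulateC n C))) (emulate n t)
  | .seqR t C => .seqR (.app (caseUnitU n) (.app (upgrade n 1) (emulate n t))) (emulateC n C)
  | .tifC C t₁ t₂ => .tifC (.appR (caseBoolU n) (.appR (upgrade n 1) (emulateC n C)))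
      (emulate n t₁) (emulate n t₂)
  | .tifT t C t₂ => .tifT (.app (caseBoolU n) (.app (upgrade n 1) (emulate n t)))
      (emulateC n C) (emulate n t₂)
  | .tifF t t₁ C => .tifF (.app (caseBoolU n) (.app (upgrade n 1) (emulate n t)))
      (emulate n t₁) (emulateC n C)

/-- the approximate back-translation `⟨⟨C̲⟩⟩_{τ;m} := emulate_{m+1}(C̲)[inject_{τ;m} ·]`,
as an operation plugging a λτ term into the back-translated context. -/
def backtrPlug (τ : Ty) (m : ℕ) (C : UPC) (t : STm) : STm :=
  (emulateC (m+1) C).plug (.app (injectTm m τ) t)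

end FAC

namespace FAC

/-- Well-scopedness for source terms. -/
def STm.ws : STm → ℕ → Prop
  | .var m, n => m < n
  | .unit, _ => True
  | .tt, _ => True
  | .ff, _ => True
  | .lam _ t, n => t.ws (n+1)
  | .app a b, n => a.ws n ∧ b.ws n
  | .pair a b, n => a.ws n ∧ b.ws n
  | .p1 t, n => t.ws n
  | .p2 t, n => t.ws n
  | .inl t, n => t.ws n
  | .inr t, n => t.ws n
  | .caseOf t a b, n => t.ws n ∧ a.ws (n+1) ∧ b.ws (n+1)
  | .seq a b, n => a.ws n ∧ b.ws n
  | .tif t a b, n => t.ws n ∧ a.ws n ∧ b.ws n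
  | .fixt _ _ t, n => t.ws n

theorem STm.ws_mono : ∀ (t : STm) {n n'}, t.ws n → n ≤ n' → t.ws n'
  | .var m, _, _, h, hle => lt_of_lt_of_le h hle
  | .unit, _, _, _, _ => trivial
  | .tt, _, _, _, _ => trivial
  | .ff, _, _, _, _ => trivial
  | .lam _ t, _, _, h, hle => STm.ws_mono t h (by omega)
  | .app a b, _, _, h, hle => ⟨STm.ws_mono a h.1 hle, STm.ws_mono b h.2 hle⟩
  | .pair a b, _, _, h, hle => ⟨STm.ws_mono a h.1 hle, STm.ws_mono b h.2 hle⟩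
  | .p1 t, _, _, h, hle => STm.ws_mono t h hle
  | .p2 t, _, _, h, hle => STm.ws_mono t h hle
  | .inl t, _, _, h, hle => STm.ws_mono t h hle
  | .inr t, _, _, h, hle => STm.ws_mono t h hle
  | .caseOf t a b, _, _, h, hle =>
      ⟨STm.ws_mono t h.1 hle, STm.ws_mono a h.2.1 (by omega), STm.ws_mono b h.2.2 (by omega)⟩
  | .seq a b, _, _, h, hle => ⟨STm.ws_mono a h.1 hle, STm.ws_mono b h.2 hle⟩
  | .tif t a b, _, _, h, hle =>
      ⟨STm.ws_mono t h.1 hle, STm.ws_mono a h.2.1 hle, STm.ws_mono b h.2.2 hle⟩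
  | .fixt _ _ t, _, _, h, hle => STm.ws_mono t h hle

theorem liftS_id {n : ℕ} {σ : ℕ → STm} (hσ : ∀ i < n, σ i = .var i) :
    ∀ i < n+1, liftS σ i = .var i := by
  intro i hi
  match i with
  | 0 => rfl
  | j+1 => simp [liftS, hσ j (by omega), STm.rename]

theorem liftR_id {n : ℕ} {f : ℕ → ℕ} (hf : ∀ i < n, f i = i) :
    ∀ i < n+1, liftR f i = i := by
  intro i hi
  match i with
  | 0 => rfl
  | j+1 => simp [liftR, hf j (by omega)]

theorem STm.subst_ws_id : ∀ (t : STm) {n σ}, t.ws n → (∀ i < n, σ i = .var i) →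
    t.subst σ = t
  | .var m, _, _, h, hσ => hσ m h
  | .unit, _, _, _, _ => rfl
  | .tt, _, _, _, _ => rfl
  | .ff, _, _, _, _ => rfl
  | .lam τ t, _, _, h, hσ => by
      simp only [STm.subst]; rw [STm.subst_ws_id t h (liftS_id hσ)]
  | .app a b, _, _, h, hσ => by
      simp only [STm.subst]; rw [STm.subst_ws_id a h.1 hσ, STm.subst_ws_id b h.2 hσ]
  | .pair a b, _, _, h, hσ => by
      simp only [STm.subst]; rw [STm.subst_ws_id a h.1 hσ, STm.subst_ws_id b h.2 hσ]
  | .p1 t, _, _, h, hσ => by simp only [STm.subst]; rw [STm.subst_ws_id t h hσ]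
  | .p2 t, _, _, h, hσ => by simp only [STm.subst]; rw [STm.subst_ws_id t h hσ]
  | .inl t, _, _, h, hσ => by simp only [STm.subst]; rw [STm.subst_ws_id t h hσ]
  | .inr t, _, _, h, hσ => by simp only [STm.subst]; rw [STm.subst_ws_id t h hσ]
  | .caseOf t a b, _, _, h, hσ => by
      simp only [STm.subst]
      rw [STm.subst_ws_id t h.1 hσ, STm.subst_ws_id a h.2.1 (liftS_id hσ),
        STm.subst_ws_id b h.2.2 (liftS_id hσ)]
  | .seq a b, _, _, h, hσ => by
      simp only [STm.subst]; rw [STm.subst_ws_id a h.1 hσ, STm.subst_ws_id b h.2 hσ]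
  | .tif t a b, _, _, h, hσ => by
      simp only [STm.subst]
      rw [STm.subst_ws_id t h.1 hσ, STm.subst_ws_id a h.2.1 hσ, STm.subst_ws_id b h.2.2 hσ]
  | .fixt x y t, _, _, h, hσ => by simp only [STm.subst]; rw [STm.subst_ws_id t h hσ]

theorem STm.subst_closed {t : STm} (h : t.ws 0) (σ : ℕ → STm) : t.subst σ = t :=
  STm.subst_ws_id t h (by omega)

theorem STm.rename_ws_id : ∀ (t : STm) {n f}, t.ws n → (∀ i < n, f i = i) →
    t.rename f = t
  | .var m, _, _, h, hf => by simp only [STm.rename]; rw [hf m h]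
  | .unit, _, _, _, _ => rfl
  | .tt, _, _, _, _ => rfl
  | .ff, _, _, _, _ => rfl
  | .lam τ t, _, _, h, hf => by
      simp only [STm.rename]; rw [STm.rename_ws_id t h (liftR_id hf)]
  | .app a b, _, _, h, hf => by
      simp only [STm.rename]; rw [STm.rename_ws_id a h.1 hf, STm.rename_ws_id b h.2 hf]
  | .pair a b, _, _, h, hf => by
      simp only [STm.rename]; rw [STm.rename_ws_id a h.1 hf, STm.rename_ws_id b h.2 hf]
  | .p1 t, _, _, h, hf => by simp only [STm.rename]; rw [STm.rename_ws_id t h hf]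
  | .p2 t, _, _, h, hf => by simp only [STm.rename]; rw [STm.rename_ws_id t h hf]
  | .inl t, _, _, h, hf => by simp only [STm.rename]; rw [STm.rename_ws_id t h hf]
  | .inr t, _, _, h, hf => by simp only [STm.rename]; rw [STm.rename_ws_id t h hf]
  | .caseOf t a b, _, _, h, hf => by
      simp only [STm.rename]
      rw [STm.rename_ws_id t h.1 hf, STm.rename_ws_id a h.2.1 (liftR_id hf),
        STm.rename_ws_id b h.2.2 (liftR_id hf)]
  | .seq a b, _, _, h, hf => by
      simp only [STm.rename]; rw [STm.rename_ws_id a h.1 hf, STm.rename_ws_id b h.2 hf]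
  | .tif t a b, _, _, h, hf => by
      simp only [STm.rename]
      rw [STm.rename_ws_id t h.1 hf, STm.rename_ws_id a h.2.1 hf, STm.rename_ws_id b h.2.2 hf]
  | .fixt x y t, _, _, h, hf => by simp only [STm.rename]; rw [STm.rename_ws_id t h hf]

theorem STm.rename_closed {t : STm} (h : t.ws 0) (f : ℕ → ℕ) : t.rename f = t :=
  STm.rename_ws_id t h (by omega)

theorem hasTy_ws {Γ t τ} (h : HasTy Γ t τ) : STm.ws t Γ.length := by
  induction h <;> simp_all [STm.ws, List.length]
  case var h => exact List.getElem?_eq_some_iff.mp h |>.1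

/-- renaming preserves typing -/
theorem hasTy_rename {Γ t τ} (h : HasTy Γ t τ) :
    ∀ {Δ : List Ty} {f : ℕ → ℕ}, (∀ i τ', Γ[i]? = some τ' → Δ[f i]? = some τ') →
    HasTy Δ (t.rename f) τ := by
  induction h with
    intro Δ f hf
  | var h => exact HasTy.var (hf _ _ h)
  | unit => exact .unit
  | tt => exact .tt
  | ff => exact .ff
  | lam _ ih =>
    refine .lam (ih ?_)
    intro i τ' hi
    match i with
    | 0 => simpa [liftR] using hi
    | j+1 => simp only [liftR, List.getElem?_cons_succ] at hi ⊢; exact hf j τ' hi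
  | app _ _ ih1 ih2 => exact .app (ih1 hf) (ih2 hf)
  | pair _ _ ih1 ih2 => exact .pair (ih1 hf) (ih2 hf)
  | p1 _ ih => exact .p1 (ih hf)
  | p2 _ ih => exact .p2 (ih hf)
  | inl _ ih => exact .inl (ih hf)
  | inr _ ih => exact .inr (ih hf)
  | caseOf _ _ _ ih iha ihb =>
    refine .caseOf (ih hf) (iha ?_) (ihb ?_) <;>
    · intro i τ' hi
      match i with
      | 0 => simpa [liftR] using hi
      | j+1 => simp only [liftR, List.getElem?_cons_succ] at hi ⊢; exact hf j τ' hi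
  | seq _ _ ih1 ih2 => exact .seq (ih1 hf) (ih2 hf)
  | tif _ _ _ ih iha ihb => exact .tif (ih hf) (iha hf) (ihb hf)
  | fixt _ ih => exact .fixt (ih hf)

theorem hasTy_closed_weaken {t τ} (h : HasTy [] t τ) (Δ : List Ty) : HasTy Δ t τ := by
  have := hasTy_rename h (Δ := Δ) (f := id) (by intro i τ' hi; simp at hi)
  rwa [STm.rename_ws_id t (hasTy_ws h) (by simp)] at this

end FAC
namespace FAC

theorem sval_no_step : ∀ {t t'}, SStep t t' → SIsVal t → False := by
  intro t t' h
  induction h <;> intro hv <;> cases hv <;> simp_all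

theorem sstep_det : ∀ {t a b}, SStep t a → SStep t b → a = b := by
  intro t a b h1
  induction h1 generalizing b <;> intro h2 <;> cases h2 <;>
    try rfl
  all_goals try (exfalso; solve_by_elim [sval_no_step])
  all_goals (congr 1; solve_by_elim)

theorem sstepN_trans : ∀ {a t u v b}, SStepN a t u → SStepN b u v → SStepN (a+b) t v := by
  intro a
  induction a with
  | zero => intro t u v b h1 h2; cases h1; simpa using h2
  | succ n ih =>
    rintro t u v b ⟨t', hs, hn⟩ h2
    have e : n+1+b = (n+b)+1 := by omega
    rw [e]
    exact ⟨t', hs, ih hn h2⟩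

theorem sstar_refl (t : STm) : SStepStar t t := ⟨0, rfl⟩

theorem sstar_trans {t u v} (h1 : SStepStar t u) (h2 : SStepStar u v) : SStepStar t v := by
  obtain ⟨a, h1⟩ := h1; obtain ⟨b, h2⟩ := h2
  exact ⟨a+b, sstepN_trans h1 h2⟩

theorem sstar_one {t t'} (h : SStep t t') : SStepStar t t' := ⟨1, t', h, rfl⟩

theorem sstar_head {t t' u} (h : SStep t t') (h2 : SStepStar t' u) : SStepStar t u :=
  sstar_trans (sstar_one h) h2

theorem sstep_plug {Cs : SEC} (hok : Cs.ok) : ∀ {t t'}, SStep t t' →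
    SStep (Cs.plug t) (Cs.plug t') := by
  induction Cs <;> intro t t' h <;> simp only [SEC.plug] <;>
    first
      | exact h
      | (constructor; solve_by_elim [SEC.ok])
      | (rcases hok with ⟨h1, h2⟩; constructor; · exact h1
         solve_by_elim)

theorem sstepN_plug {Cs : SEC} (hok : Cs.ok) : ∀ {q t t'}, SStepN q t t' →
    SStepN q (Cs.plug t) (Cs.plug t') := by
  intro q
  induction q with
  | zero => rintro t t' rfl; rfl
  | succ n ih => rintro t t' ⟨u, hs, hn⟩; exact ⟨Cs.plug u, sstep_plug hok hs, ih hn⟩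

theorem sstar_plug {Cs : SEC} (hok : Cs.ok) {t t'} (h : SStepStar t t') :
    SStepStar (Cs.plug t) (Cs.plug t') := by
  obtain ⟨q, h⟩ := h; exact ⟨q, sstepN_plug hok h⟩

/-- in a halting trace, any reduction of the start is a prefix -/
theorem sstepN_prefix : ∀ {q t t'}, SStepN q t t' → ∀ {m v}, SStepN m t v → SIsVal v →
    q ≤ m ∧ SStepN (m-q) t' v := by
  intro q
  induction q with
  | zero => rintro t t' rfl m v h2 hv; exact ⟨Nat.zero_le _, h2⟩
  | succ n ih =>
    rintro t t' ⟨u, hs, hn⟩ m v h2 hv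
    match m, h2 with
    | 0, h2 => exact absurd hs (by cases h2; intro hs; exact sval_no_step hs hv)
    | m+1, ⟨u', hs', hn'⟩ =>
      rcases sstep_det hs hs' with rfl
      obtain ⟨h1, h2⟩ := ih hn hn' hv
      exact ⟨by omega, by simpa [Nat.succ_sub_succ] using h2⟩

theorem shalts_antired {t t'} (h : SStepStar t t') (hh : SHalts t') : SHalts t := by
  obtain ⟨q, h⟩ := h; obtain ⟨m, v, hm, hv⟩ := hh
  exact ⟨q + m, v, sstepN_trans h hm, hv⟩

/-- anti-reduction on the source side for the observation relation -/
theorem obs_antired {dir k t t' u} (h : SStepStar t t') (ho : Obs dir k t' u) :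
    Obs dir k t u := by
  cases dir with
  | lt =>
    rintro ⟨m, hm, v, hstep, hv⟩
    obtain ⟨q, h⟩ := h
    obtain ⟨h1, h2⟩ := sstepN_prefix h hstep hv
    exact ho ⟨m - q, by omega, v, h2, hv⟩
  | gt =>
    intro hu
    exact shalts_antired h (ho hu)

/-- composition of source evaluation contexts -/
def SEC.comp : SEC → SEC → SEC
  | .hole, D => D
  | .appL C t, D => .appL (C.comp D) t
  | .appR v C, D => .appR v (C.comp D)
  | .pairL C t, D => .pairL (C.comp D) t
  | .pairR v C, D => .pairR v (C.comp D)
  | .p1 C, D => .p1 (C.comp D)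
  | .p2 C, D => .p2 (C.comp D)
  | .inl C, D => .inl (C.comp D)
  | .inr C, D => .inr (C.comp D)
  | .caseOf C a b, D => .caseOf (C.comp D) a b
  | .seq C t, D => .seq (C.comp D) t
  | .tif C a b, D => .tif (C.comp D) a b
  | .fixt a b C, D => .fixt a b (C.comp D)

theorem SEC.comp_plug : ∀ (C D : SEC) (t : STm), (C.comp D).plug t = C.plug (D.plug t) := by
  intro C D t
  induction C <;> simp_all [SEC.comp, SEC.plug]

theorem SEC.comp_ok : ∀ {C D : SEC}, C.ok → D.ok → (C.comp D).ok := by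
  intro C D hC hD
  induction C <;> simp_all [SEC.comp, SEC.ok]

end FAC
namespace FAC

theorem hasTy_unkUVal (Γ : List Ty) : ∀ n, HasTy Γ (unkUVal n) (UValTy n)
  | 0 => .unit
  | n+1 => .inl .unit

theorem sval_unkUVal : ∀ n, SIsVal (unkUVal n)
  | 0 => .unit
  | _+1 => .inl .unit

theorem hasTy_inUnk {Γ n} : HasTy Γ inUnk (UValTy (n+1)) := .inl .unit

theorem hasTy_inUnit {Γ n v} (h : HasTy Γ v .unit) : HasTy Γ (inUnit v) (UValTy (n+1)) :=
  .inr (.inl h)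

theorem hasTy_inBool {Γ n v} (h : HasTy Γ v .bool) : HasTy Γ (inBool v) (UValTy (n+1)) :=
  .inr (.inr (.inl h))

theorem hasTy_inProd {Γ n v} (h : HasTy Γ v (.prod (UValTy n) (UValTy n))) :
    HasTy Γ (inProd v) (UValTy (n+1)) := .inr (.inr (.inr (.inl h)))

theorem hasTy_inSum {Γ n v} (h : HasTy Γ v (.sum (UValTy n) (UValTy n))) :
    HasTy Γ (inSum v) (UValTy (n+1)) := .inr (.inr (.inr (.inr (.inl h))))

theorem hasTy_inArr {Γ n v} (h : HasTy Γ v (.arr (UValTy n) (UValTy n))) :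
    HasTy Γ (inArr v) (UValTy (n+1)) := .inr (.inr (.inr (.inr (.inr h))))

theorem sval_inUnk : SIsVal inUnk := .inl .unit
theorem sval_inUnit {v} (h : SIsVal v) : SIsVal (inUnit v) := .inr (.inl h)
theorem sval_inBool {v} (h : SIsVal v) : SIsVal (inBool v) := .inr (.inr (.inl h))
theorem sval_inProd {v} (h : SIsVal v) : SIsVal (inProd v) := .inr (.inr (.inr (.inl h)))
theorem sval_inSum {v} (h : SIsVal v) : SIsVal (inSum v) := .inr (.inr (.inr (.inr (.inl h))))
theorem sval_inArr {v} (h : SIsVal v) : SIsVal (inArr v) := .inr (.inr (.inr (.inr (.inr h))))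

theorem hasTy_updown_body {Γ sm op} (a c : ℕ)
    (hsm : ∀ Δ, HasTy Δ sm (.arr (UValTy a) (UValTy c)))
    (hop : ∀ Δ, HasTy Δ op (.arr (UValTy c) (UValTy a))) :
    HasTy Γ (.lam (UValTy (a+1)) (.caseOf (.var 0) inUnk
      (.caseOf (.var 0) (inUnit (.var 0))
        (.caseOf (.var 0) (inBool (.var 0))
          (.caseOf (.var 0) (inProd (.pair (.app sm (.p1 (.var 0))) (.app sm (.p2 (.var 0)))))
            (.caseOf (.var 0)
              (inSum (.caseOf (.var 0) (.inl (.app sm (.var 0))) (.inr (.app sm (.var 0)))))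
              (inArr (.lam (UValTy c) (.app sm (.app (.var 1) (.app op (.var 0))))))))))))
      (.arr (UValTy (a+1)) (UValTy (c+1))) := by
  set Ua := UValTy a with hUa
  set R4 : Ty := .sum (.sum Ua Ua) (.arr Ua Ua) with hR4
  set R3 : Ty := .sum (.prod Ua Ua) R4 with hR3
  set R2 : Ty := .sum .bool R3 with hR2
  set R1 : Ty := .sum .unit R2 with hR1
  have hUV : UValTy (a+1) = .sum .unit R1 := by
    simp [UValTy, hR1, hR2, hR3, hR4, hUa]
  have h0 : (UValTy (a+1) :: Γ)[0]? = some (Ty.sum .unit R1) := by rw [hUV]; simp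
  refine .lam (.caseOf (.var h0) hasTy_inUnk ?_)
  have h1 : (R1 :: UValTy (a+1) :: Γ)[0]? = some (Ty.sum .unit R2) := by simp [hR1]
  refine .caseOf (.var h1) (hasTy_inUnit (.var (by simp))) ?_
  have h2 : (R2 :: R1 :: UValTy (a+1) :: Γ)[0]? = some (Ty.sum .bool R3) := by simp [hR2]
  refine .caseOf (.var h2) (hasTy_inBool (.var (by simp))) ?_
  have h3 : (R3 :: R2 :: R1 :: UValTy (a+1) :: Γ)[0]? =
      some (Ty.sum (.prod Ua Ua) R4) := by simp [hR3]
  have h3l : ((Ty.prod Ua Ua) :: R3 :: R2 :: R1 :: UValTy (a+1) :: Γ)[0]? =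
      some (Ty.prod Ua Ua) := by simp
  refine .caseOf (.var h3)
    (hasTy_inProd (.pair (.app (hsm _) (.p1 (.var h3l))) (.app (hsm _) (.p2 (.var h3l))))) ?_
  have h4 : (R4 :: R3 :: R2 :: R1 :: UValTy (a+1) :: Γ)[0]? =
      some (Ty.sum (.sum Ua Ua) (.arr Ua Ua)) := by simp [hR4]
  have h5 : ((Ty.sum Ua Ua) :: R4 :: R3 :: R2 :: R1 :: UValTy (a+1) :: Γ)[0]? =
      some (Ty.sum Ua Ua) := by simp
  have h6 : (UValTy c :: (Ty.arr Ua Ua) :: R4 :: R3 :: R2 :: R1 :: UValTy (a+1) :: Γ)[1]? =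
      some (Ty.arr Ua Ua) := by simp
  refine .caseOf (.var h4)
    (hasTy_inSum (.caseOf (.var h5) (.inl (.app (hsm _) (.var (by simp))))
      (.inr (.app (hsm _) (.var (by simp))))))
    (hasTy_inArr (.lam (.app (hsm _) (.app (.var h6) (.app (hop _) (.var (by simp)))))))

/-- typing of the upgrade/downgrade functions -/
theorem hasTy_updown (d : ℕ) : ∀ (n : ℕ) (b : Bool) (Γ : List Ty),
    HasTy Γ (updown d b n)
      (.arr (UValTy (cond b n (n+d))) (UValTy (cond b (n+d) n))) := by
  intro n
  induction n with
  | zero =>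
    intro b Γ
    cases b
    · have e : updown d false 0 = .lam (UValTy d) (unkUVal 0) := rfl
      have e2 : (0:ℕ)+d = d := by omega
      simp only [cond, e, e2]
      exact .lam (hasTy_unkUVal _ 0)
    · have e : updown d true 0 = .lam (UValTy 0) (unkUVal d) := rfl
      have e2 : (0:ℕ)+d = d := by omega
      simp only [cond, e, e2]
      exact .lam (hasTy_unkUVal _ d)
  | succ n ih =>
    intro b Γ
    cases b
    · have e : updown d false (n+1) = .lam (UValTy (n+d+1)) (.caseOf (.var 0) inUnk
        (.caseOf (.var 0) (inUnit (.var 0))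
          (.caseOf (.var 0) (inBool (.var 0))
            (.caseOf (.var 0) (inProd (.pair (.app (updown d false n) (.p1 (.var 0)))
                (.app (updown d false n) (.p2 (.var 0)))))
              (.caseOf (.var 0)
                (inSum (.caseOf (.var 0) (.inl (.app (updown d false n) (.var 0)))
                  (.inr (.app (updown d false n) (.var 0)))))
                (inArr (.lam (UValTy n)
                  (.app (updown d false n)
                    (.app (.var 1) (.app (updown d true n) (.var 0))))))))))) := rfl
      have e2 : n+1+d = (n+d)+1 := by omega
      simp only [cond, e, e2]
      exact hasTy_updown_body (n+d) n (fun Δ => by simpa using ih false Δ)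
        (fun Δ => by simpa using ih true Δ)
    · have e : updown d true (n+1) = .lam (UValTy (n+1)) (.caseOf (.var 0) inUnk
        (.caseOf (.var 0) (inUnit (.var 0))
          (.caseOf (.var 0) (inBool (.var 0))
            (.caseOf (.var 0) (inProd (.pair (.app (updown d true n) (.p1 (.var 0)))
                (.app (updown d true n) (.p2 (.var 0)))))
              (.caseOf (.var 0)
                (inSum (.caseOf (.var 0) (.inl (.app (updown d true n) (.var 0)))
                  (.inr (.app (updown d true n) (.var 0)))))
                (inArr (.lam (UValTy (n+d))
                  (.app (updown d true n)
                    (.app (.var 1) (.app (updown d false n) (.var 0))))))))))) := rfl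
      have e2 : n+1+d = (n+d)+1 := by omega
      simp only [cond, e, e2]
      exact hasTy_updown_body n (n+d) (fun Δ => by simpa using ih true Δ)
        (fun Δ => by simpa using ih false Δ)

theorem hasTy_downgrade (m d : ℕ) (Γ : List Ty) :
    HasTy Γ (downgrade m d) (.arr (UValTy (m+d)) (UValTy m)) := by
  simpa [downgrade] using hasTy_updown d m false Γ

theorem hasTy_upgrade (m d : ℕ) (Γ : List Ty) :
    HasTy Γ (upgrade m d) (.arr (UValTy m) (UValTy (m+d))) := by
  simpa [upgrade] using hasTy_updown d m true Γ

theorem ws_updown (d n : ℕ) (b : Bool) : STm.ws (updown d b n) 0 := by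
  simpa using hasTy_ws (hasTy_updown d n b [])

theorem sval_updown (d n : ℕ) (b : Bool) : SIsVal (updown d b n) := by
  cases n <;> cases b <;> (first | exact .lam | (simp only [updown]; exact .lam))

/-! canonical forms -/

theorem canon_unit {v} (h : HasTy [] v .unit) (hv : SIsVal v) : v = .unit := by
  cases hv <;> cases h <;> rfl

theorem canon_pair {v a b} (h : HasTy [] v (.prod a b)) (hv : SIsVal v) :
    ∃ v₁ v₂, v = .pair v₁ v₂ ∧ SIsVal v₁ ∧ SIsVal v₂ ∧ HasTy [] v₁ a ∧ HasTy [] v₂ b := by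
  cases hv <;> cases h
  exact ⟨_, _, rfl, by assumption, by assumption, by assumption, by assumption⟩

theorem canon_sum {v a b} (h : HasTy [] v (.sum a b)) (hv : SIsVal v) :
    (∃ w, v = .inl w ∧ SIsVal w ∧ HasTy [] w a) ∨
    (∃ w, v = .inr w ∧ SIsVal w ∧ HasTy [] w b) := by
  cases hv <;> cases h
  · exact .inl ⟨_, rfl, by assumption, by assumption⟩
  · exact .inr ⟨_, rfl, by assumption, by assumption⟩

theorem canon_arr {v a b} (h : HasTy [] v (.arr a b)) (hv : SIsVal v) :
    ∃ t, v = .lam a t ∧ HasTy [a] t b := by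
  cases hv <;> cases h
  exact ⟨_, rfl, by assumption⟩

end FAC
namespace FAC

def body4 (sm op : STm) (z : Ty) : STm :=
  .caseOf (.var 0)
    (inSum (.caseOf (.var 0) (.inl (.app sm (.var 0))) (.inr (.app sm (.var 0)))))
    (inArr (.lam z (.app sm (.app (.var 1) (.app op (.var 0))))))

def body3 (sm op : STm) (z : Ty) : STm :=
  .caseOf (.var 0) (inProd (.pair (.app sm (.p1 (.var 0))) (.app sm (.p2 (.var 0)))))
    (body4 sm op z)

def body2 (sm op : STm) (z : Ty) : STm :=
  .caseOf (.var 0) (inBool (.var 0)) (body3 sm op z)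

def body1 (sm op : STm) (z : Ty) : STm :=
  .caseOf (.var 0) (inUnit (.var 0)) (body2 sm op z)

def bigBody (sm op : STm) (z : Ty) : STm :=
  .caseOf (.var 0) inUnk (body1 sm op z)

theorem updown_succ_eq (d n : ℕ) (b : Bool) : updown d b (n+1) =
    .lam (cond b (UValTy (n+1)) (UValTy (n+d+1)))
      (bigBody (updown d b n) (updown d (!b) n) (cond b (UValTy (n+d)) (UValTy n))) := by
  cases b <;> rfl

section
variable {sm op : STm} {z : Ty}

theorem ws_body4 (hs : sm.ws 0) (ho : op.ws 0) : (body4 sm op z).ws 1 := by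
  have hsk : ∀ k, sm.ws k := fun k => STm.ws_mono sm hs (Nat.zero_le k)
  have hok : ∀ k, op.ws k := fun k => STm.ws_mono op ho (Nat.zero_le k)
  simp [body4, STm.ws, inSum, inArr, hsk, hok]

theorem ws_body3 (hs : sm.ws 0) (ho : op.ws 0) : (body3 sm op z).ws 1 := by
  have hsk : ∀ k, sm.ws k := fun k => STm.ws_mono sm hs (Nat.zero_le k)
  have hok : ∀ k, op.ws k := fun k => STm.ws_mono op ho (Nat.zero_le k)
  simp [body3, body4, STm.ws, inProd, inSum, inArr, hsk, hok]

theorem ws_body2 (hs : sm.ws 0) (ho : op.ws 0) : (body2 sm op z).ws 1 := by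
  have hsk : ∀ k, sm.ws k := fun k => STm.ws_mono sm hs (Nat.zero_le k)
  have hok : ∀ k, op.ws k := fun k => STm.ws_mono op ho (Nat.zero_le k)
  simp [body2, body3, body4, STm.ws, inBool, inProd, inSum, inArr, hsk, hok]

theorem ws_body1 (hs : sm.ws 0) (ho : op.ws 0) : (body1 sm op z).ws 1 := by
  have hsk : ∀ k, sm.ws k := fun k => STm.ws_mono sm hs (Nat.zero_le k)
  have hok : ∀ k, op.ws k := fun k => STm.ws_mono op ho (Nat.zero_le k)
  simp [body1, body2, body3, body4, STm.ws, inUnit, inBool, inProd, inSum, inArr, hsk, hok]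

theorem liftS_lt1 (σ : ℕ → STm) : ∀ i < 1, liftS σ i = .var i := by
  intro i hi
  match i, hi with
  | 0, _ => rfl

/-- the common prefix: peel the beta plus the first `j` case analyses -/
theorem bigBody_red_unk {A} (hs : sm.ws 0) (ho : op.ws 0) :
    SStepStar (.app (.lam A (bigBody sm op z)) inUnk) inUnk := by
  refine sstar_head (SStep.beta sval_inUnk) ?_
  have e : (bigBody sm op z).subst0 inUnk =
      .caseOf inUnk inUnk (body1 sm op z) := by
    simp only [bigBody, body1, body2, body3, body4, inUnk, inUnit, inBool, inProd, inSum,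
      inArr, STm.subst0, STm.subst, liftS, STm.rename, STm.subst_closed hs,
      STm.subst_closed ho]
  rw [e, inUnk]
  exact sstar_one (SStep.caseL .unit)

end

end FAC
namespace FAC

/-- the substitution function of subst0 -/
def sub0 (v : STm) : ℕ → STm := fun n => match n with | 0 => v | n+1 => .var n

theorem subst0_eq (t v : STm) : t.subst0 v = t.subst (sub0 v) := rfl

section
variable {sm op : STm} {z : Ty}

theorem bigBody_subst0 (hs : sm.ws 0) (ho : op.ws 0) (w : STm) :
    (bigBody sm op z).subst0 w = .caseOf w inUnk (body1 sm op z) := by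
  have e1 : ∀ σ, (body1 sm op z).subst (liftS σ) = body1 sm op z :=
    fun σ => STm.subst_ws_id _ (ws_body1 hs ho) (liftS_lt1 σ)
  have e2 : ∀ σ, STm.subst (liftS σ) inUnk = inUnk :=
    fun σ => STm.subst_ws_id _ (show STm.ws inUnk 1 by simp [inUnk, STm.ws]) (liftS_lt1 σ)
  have base : (bigBody sm op z).subst0 w = STm.caseOf (sub0 w 0)
      (STm.subst (liftS (sub0 w)) inUnk)
      (STm.subst (liftS (sub0 w)) (body1 sm op z)) := rfl
  rw [base, e1, e2]; rfl

theorem body1_subst0 (hs : sm.ws 0) (ho : op.ws 0) (w : STm) :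
    (body1 sm op z).subst0 w = .caseOf w (inUnit (.var 0)) (body2 sm op z) := by
  have e1 : ∀ σ, (body2 sm op z).subst (liftS σ) = body2 sm op z :=
    fun σ => STm.subst_ws_id _ (ws_body2 hs ho) (liftS_lt1 σ)
  have e2 : ∀ σ, STm.subst (liftS σ) (inUnit (.var 0)) = inUnit (.var 0) :=
    fun σ => STm.subst_ws_id _ (show STm.ws (inUnit (.var 0)) 1 by simp [inUnit, STm.ws])
      (liftS_lt1 σ)
  have base : (body1 sm op z).subst0 w = STm.caseOf (sub0 w 0)
      (STm.subst (liftS (sub0 w)) (inUnit (.var 0)))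
      (STm.subst (liftS (sub0 w)) (body2 sm op z)) := rfl
  rw [base, e1, e2]; rfl

theorem body2_subst0 (hs : sm.ws 0) (ho : op.ws 0) (w : STm) :
    (body2 sm op z).subst0 w = .caseOf w (inBool (.var 0)) (body3 sm op z) := by
  have e1 : ∀ σ, (body3 sm op z).subst (liftS σ) = body3 sm op z :=
    fun σ => STm.subst_ws_id _ (ws_body3 hs ho) (liftS_lt1 σ)
  have e2 : ∀ σ, STm.subst (liftS σ) (inBool (.var 0)) = inBool (.var 0) :=
    fun σ => STm.subst_ws_id _ (show STm.ws (inBool (.var 0)) 1 by simp [inBool, STm.ws])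
      (liftS_lt1 σ)
  have base : (body2 sm op z).subst0 w = STm.caseOf (sub0 w 0)
      (STm.subst (liftS (sub0 w)) (inBool (.var 0)))
      (STm.subst (liftS (sub0 w)) (body3 sm op z)) := rfl
  rw [base, e1, e2]; rfl

theorem body3_subst0 (hs : sm.ws 0) (ho : op.ws 0) (w : STm) :
    (body3 sm op z).subst0 w = .caseOf w
      (inProd (.pair (.app sm (.p1 (.var 0))) (.app sm (.p2 (.var 0)))))
      (body4 sm op z) := by
  have hsk : ∀ k, sm.ws k := fun k => STm.ws_mono sm hs (Nat.zero_le k)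
  have e1 : ∀ σ, (body4 sm op z).subst (liftS σ) = body4 sm op z :=
    fun σ => STm.subst_ws_id _ (ws_body4 hs ho) (liftS_lt1 σ)
  have e2 : ∀ σ, STm.subst (liftS σ)
      (inProd (.pair (.app sm (.p1 (.var 0))) (.app sm (.p2 (.var 0))))) =
      inProd (.pair (.app sm (.p1 (.var 0))) (.app sm (.p2 (.var 0)))) :=
    fun σ => STm.subst_ws_id _ (show STm.ws _ 1 by simp [inProd, STm.ws, hsk]) (liftS_lt1 σ)
  have base : (body3 sm op z).subst0 w = STm.caseOf (sub0 w 0)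
      (STm.subst (liftS (sub0 w))
        (inProd (.pair (.app sm (.p1 (.var 0))) (.app sm (.p2 (.var 0))))))
      (STm.subst (liftS (sub0 w)) (body4 sm op z)) := rfl
  rw [base, e1, e2]; rfl

theorem body4_subst0 (hs : sm.ws 0) (ho : op.ws 0) (w : STm) :
    (body4 sm op z).subst0 w = .caseOf w
      (inSum (.caseOf (.var 0) (.inl (.app sm (.var 0))) (.inr (.app sm (.var 0)))))
      (inArr (.lam z (.app sm (.app (.var 1) (.app op (.var 0)))))) := by
  have hsk : ∀ k, sm.ws k := fun k => STm.ws_mono sm hs (Nat.zero_le k)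
  have hok : ∀ k, op.ws k := fun k => STm.ws_mono op ho (Nat.zero_le k)
  have e1 : ∀ σ, STm.subst (liftS σ)
      (inSum (.caseOf (.var 0) (.inl (.app sm (.var 0))) (.inr (.app sm (.var 0))))) =
      inSum (.caseOf (.var 0) (.inl (.app sm (.var 0))) (.inr (.app sm (.var 0)))) :=
    fun σ => STm.subst_ws_id _ (show STm.ws _ 1 by simp [inSum, STm.ws, hsk]) (liftS_lt1 σ)
  have e2 : ∀ σ, STm.subst (liftS σ)
      (inArr (.lam z (.app sm (.app (.var 1) (.app op (.var 0)))))) =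
      inArr (.lam z (.app sm (.app (.var 1) (.app op (.var 0))))) :=
    fun σ => STm.subst_ws_id _ (show STm.ws _ 1 by simp [inArr, STm.ws, hsk, hok])
      (liftS_lt1 σ)
  have base : (body4 sm op z).subst0 w = STm.caseOf (sub0 w 0)
      (STm.subst (liftS (sub0 w))
        (inSum (.caseOf (.var 0) (.inl (.app sm (.var 0))) (.inr (.app sm (.var 0))))))
      (STm.subst (liftS (sub0 w))
        (inArr (.lam z (.app sm (.app (.var 1) (.app op (.var 0))))))) := rfl
  rw [base, e1, e2]; rfl

theorem bigBody_red_unit (hs : sm.ws 0) (ho : op.ws 0) {A v} (hv : SIsVal v) :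
    SStepStar (.app (.lam A (bigBody sm op z)) (inUnit v)) (inUnit v) := by
  refine sstar_head (SStep.beta (sval_inUnit hv)) ?_
  rw [bigBody_subst0 hs ho, show inUnit v = STm.inr (.inl v) from rfl]
  refine sstar_head (SStep.caseR (.inl hv)) ?_
  rw [body1_subst0 hs ho]
  refine sstar_head (SStep.caseL hv) ?_
  rw [show (inUnit (.var 0)).subst0 v = inUnit v from rfl]
  exact sstar_refl _

theorem bigBody_red_bool (hs : sm.ws 0) (ho : op.ws 0) {A v} (hv : SIsVal v) :
    SStepStar (.app (.lam A (bigBody sm op z)) (inBool v)) (inBool v) := by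
  refine sstar_head (SStep.beta (sval_inBool hv)) ?_
  rw [bigBody_subst0 hs ho, show inBool v = STm.inr (.inr (.inl v)) from rfl]
  refine sstar_head (SStep.caseR (.inr (.inl hv))) ?_
  rw [body1_subst0 hs ho]
  refine sstar_head (SStep.caseR (.inl hv)) ?_
  rw [body2_subst0 hs ho]
  refine sstar_head (SStep.caseL hv) ?_
  rw [show (inBool (.var 0)).subst0 v = inBool v from rfl]
  exact sstar_refl _

theorem bigBody_red_prod (hs : sm.ws 0) (ho : op.ws 0) (hsv : SIsVal sm)
    {A v1 v2 w1 w2} (hv1 : SIsVal v1) (hv2 : SIsVal v2)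
    (h1 : SStepStar (.app sm v1) w1) (hw1 : SIsVal w1)
    (h2 : SStepStar (.app sm v2) w2) :
    SStepStar (.app (.lam A (bigBody sm op z)) (inProd (.pair v1 v2)))
      (inProd (.pair w1 w2)) := by
  have hv : SIsVal (.pair v1 v2) := .pair hv1 hv2
  refine sstar_head (SStep.beta (sval_inProd hv)) ?_
  rw [bigBody_subst0 hs ho,
    show inProd (STm.pair v1 v2) = STm.inr (.inr (.inr (.inl (.pair v1 v2)))) from rfl]
  refine sstar_head (SStep.caseR (.inr (.inr (.inl hv)))) ?_
  rw [body1_subst0 hs ho]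
  refine sstar_head (SStep.caseR (.inr (.inl hv))) ?_
  rw [body2_subst0 hs ho]
  refine sstar_head (SStep.caseR (.inl hv)) ?_
  rw [body3_subst0 hs ho]
  refine sstar_head (SStep.caseL hv) ?_
  have e0 : (inProd (.pair (.app sm (.p1 (.var 0))) (.app sm (.p2 (.var 0))))).subst0
      (.pair v1 v2) = inProd (.pair
        (.app (sm.subst (sub0 (.pair v1 v2))) (.p1 (.pair v1 v2)))
        (.app (sm.subst (sub0 (.pair v1 v2))) (.p2 (.pair v1 v2)))) := rfl
  rw [e0, STm.subst_closed hs]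
  set E1 : SEC := .inr (.inr (.inr (.inl (.pairL .hole (.app sm (.p2 (.pair v1 v2))))))) with hE1
  have ok1 : E1.ok := by simp [hE1, SEC.ok]
  have p1 : ∀ t, E1.plug t = inProd (.pair t (.app sm (.p2 (.pair v1 v2)))) := fun _ => rfl
  rw [← p1]
  refine sstar_trans (sstar_plug ok1 (sstar_head (SStep.app2 hsv (.p1V hv1 hv2)) h1)) ?_
  rw [p1]
  set E2 : SEC := .inr (.inr (.inr (.inl (.pairR w1 .hole)))) with hE2
  have ok2 : E2.ok := by simp [hE2, SEC.ok]; exact hw1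
  have p2 : ∀ t, E2.plug t = inProd (.pair w1 t) := fun _ => rfl
  rw [← p2]
  exact sstar_plug ok2 (sstar_head (SStep.app2 hsv (.p2V hv1 hv2)) h2)

theorem bigBody_red_sum_l (hs : sm.ws 0) (ho : op.ws 0) (hsv : SIsVal sm)
    {A v w} (hv : SIsVal v) (h1 : SStepStar (.app sm v) w) :
    SStepStar (.app (.lam A (bigBody sm op z)) (inSum (.inl v))) (inSum (.inl w)) := by
  have hv' : SIsVal (.inl v) := .inl hv
  refine sstar_head (SStep.beta (sval_inSum hv')) ?_
  rw [bigBody_subst0 hs ho,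
    show inSum (STm.inl v) = STm.inr (.inr (.inr (.inr (.inl (.inl v))))) from rfl]
  refine sstar_head (SStep.caseR (.inr (.inr (.inr (.inl hv'))))) ?_
  rw [body1_subst0 hs ho]
  refine sstar_head (SStep.caseR (.inr (.inr (.inl hv')))) ?_
  rw [body2_subst0 hs ho]
  refine sstar_head (SStep.caseR (.inr (.inl hv'))) ?_
  rw [body3_subst0 hs ho]
  refine sstar_head (SStep.caseR (.inl hv')) ?_
  rw [body4_subst0 hs ho]
  refine sstar_head (SStep.caseL hv') ?_
  have e : (inSum (.caseOf (.var 0) (.inl (.app sm (.var 0)))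
      (.inr (.app sm (.var 0))))).subst0 (.inl v) =
      inSum (.caseOf (.inl v)
        (.inl (.app (sm.subst (liftS (sub0 (.inl v)))) (.var 0)))
        (.inr (.app (sm.subst (liftS (sub0 (.inl v)))) (.var 0)))) := rfl
  rw [e, STm.subst_closed hs]
  set E : SEC := .inr (.inr (.inr (.inr (.inl .hole)))) with hE
  have ok : E.ok := by simp [hE, SEC.ok]
  have pE : ∀ t, E.plug t = inSum t := fun _ => rfl
  rw [← pE]
  refine sstar_trans (sstar_plug ok (sstar_one (SStep.caseL hv))) ?_
  have e2 : (STm.inl (.app sm (.var 0))).subst0 v =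
      .inl (.app (sm.subst (sub0 v)) v) := rfl
  rw [e2, STm.subst_closed hs]
  set E2 : SEC := .inr (.inr (.inr (.inr (.inl (.inl .hole))))) with hE2
  have ok2 : E2.ok := by simp [hE2, SEC.ok]
  have pE2 : ∀ t, E2.plug t = inSum (.inl t) := fun _ => rfl
  rw [show E.plug (STm.inl (.app sm v)) = E2.plug (.app sm v) from rfl, ← pE2 w]
  exact sstar_plug ok2 h1

theorem bigBody_red_sum_r (hs : sm.ws 0) (ho : op.ws 0) (hsv : SIsVal sm)
    {A v w} (hv : SIsVal v) (h1 : SStepStar (.app sm v) w) :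
    SStepStar (.app (.lam A (bigBody sm op z)) (inSum (.inr v))) (inSum (.inr w)) := by
  have hv' : SIsVal (.inr v) := .inr hv
  refine sstar_head (SStep.beta (sval_inSum hv')) ?_
  rw [bigBody_subst0 hs ho,
    show inSum (STm.inr v) = STm.inr (.inr (.inr (.inr (.inl (.inr v))))) from rfl]
  refine sstar_head (SStep.caseR (.inr (.inr (.inr (.inl hv'))))) ?_
  rw [body1_subst0 hs ho]
  refine sstar_head (SStep.caseR (.inr (.inr (.inl hv')))) ?_
  rw [body2_subst0 hs ho]
  refine sstar_head (SStep.caseR (.inr (.inl hv'))) ?_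
  rw [body3_subst0 hs ho]
  refine sstar_head (SStep.caseR (.inl hv')) ?_
  rw [body4_subst0 hs ho]
  refine sstar_head (SStep.caseL hv') ?_
  have e : (inSum (.caseOf (.var 0) (.inl (.app sm (.var 0)))
      (.inr (.app sm (.var 0))))).subst0 (.inr v) =
      inSum (.caseOf (.inr v)
        (.inl (.app (sm.subst (liftS (sub0 (.inr v)))) (.var 0)))
        (.inr (.app (sm.subst (liftS (sub0 (.inr v)))) (.var 0)))) := rfl
  rw [e, STm.subst_closed hs]
  set E : SEC := .inr (.inr (.inr (.inr (.inl .hole)))) with hE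
  have ok : E.ok := by simp [hE, SEC.ok]
  have pE : ∀ t, E.plug t = inSum t := fun _ => rfl
  rw [← pE]
  refine sstar_trans (sstar_plug ok (sstar_one (SStep.caseR hv))) ?_
  have e2 : (STm.inr (.app sm (.var 0))).subst0 v =
      .inr (.app (sm.subst (sub0 v)) v) := rfl
  rw [e2, STm.subst_closed hs]
  set E2 : SEC := .inr (.inr (.inr (.inr (.inl (.inr .hole))))) with hE2
  have ok2 : E2.ok := by simp [hE2, SEC.ok]
  have pE2 : ∀ t, E2.plug t = inSum (.inr t) := fun _ => rfl
  rw [show E.plug (STm.inr (.app sm v)) = E2.plug (.app sm v) from rfl, ← pE2 w]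
  exact sstar_plug ok2 h1

theorem bigBody_red_arr (hs : sm.ws 0) (ho : op.ws 0)
    {A v} (hv : SIsVal v) (hvw : v.ws 0) :
    SStepStar (.app (.lam A (bigBody sm op z)) (inArr v))
      (inArr (.lam z (.app sm (.app v (.app op (.var 0)))))) := by
  refine sstar_head (SStep.beta (sval_inArr hv)) ?_
  rw [bigBody_subst0 hs ho,
    show inArr v = STm.inr (.inr (.inr (.inr (.inr v)))) from rfl]
  refine sstar_head (SStep.caseR (.inr (.inr (.inr (.inr hv))))) ?_
  rw [body1_subst0 hs ho]
  refine sstar_head (SStep.caseR (.inr (.inr (.inr hv)))) ?_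
  rw [body2_subst0 hs ho]
  refine sstar_head (SStep.caseR (.inr (.inr hv))) ?_
  rw [body3_subst0 hs ho]
  refine sstar_head (SStep.caseR (.inr hv)) ?_
  rw [body4_subst0 hs ho]
  refine sstar_head (SStep.caseR hv) ?_
  have e : (inArr (.lam z (.app sm (.app (.var 1) (.app op (.var 0)))))).subst0 v =
      inArr (.lam z (.app (sm.subst (liftS (sub0 v)))
        (.app (v.rename Nat.succ) (.app (op.subst (liftS (sub0 v))) (.var 0))))) := rfl
  rw [e, STm.subst_closed hs, STm.subst_closed ho, STm.rename_closed hvw]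
  exact sstar_refl _

end

theorem updown_zero_red (d : ℕ) (b : Bool) {v : STm} (hv : SIsVal v) :
    SStepStar (.app (updown d b 0) v) (unkUVal (cond b d 0)) := by
  cases b
  · refine sstar_head (SStep.beta (τ := UValTy d) (t := unkUVal 0) hv) ?_
    have : (unkUVal 0).subst0 v = unkUVal 0 :=
      STm.subst_closed (by simp [unkUVal, STm.ws]) _
    rw [this]
    exact sstar_refl _
  · refine sstar_head (SStep.beta (τ := UValTy 0) (t := unkUVal d) hv) ?_
    have : (unkUVal d).subst0 v = unkUVal d :=
      STm.subst_closed (by cases d <;> simp [unkUVal, inUnk, STm.ws]) _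
    rw [this]
    exact sstar_refl _

end FAC
namespace FAC

theorem valRel_unit_iff {dir k vs vu} : ValRel dir k .unit vs vu ↔
    (HasTy [] vs .unit ∧ vu.ws 0 ∧ vs = .unit ∧ vu = .unit) := by rw [ValRel]

theorem valRel_bool_iff {dir k vs vu} : ValRel dir k .bool vs vu ↔
    (HasTy [] vs .bool ∧ vu.ws 0 ∧
      ((vs = .tt ∧ vu = .tt) ∨ (vs = .ff ∧ vu = .ff))) := by rw [ValRel]

theorem valRel_prod_iff {dir k a b vs vu} : ValRel dir k (.prod a b) vs vu ↔
    (HasTy [] vs (repEmul (.prod a b)) ∧ vu.ws 0 ∧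
      ∃ v₁ v₂ u₁ u₂, vs = .pair v₁ v₂ ∧ vu = .pair u₁ u₂ ∧
        SIsVal v₁ ∧ SIsVal v₂ ∧ UIsVal u₁ ∧ UIsVal u₂ ∧
        (∀ j, j + 1 ≤ k → ValRel dir j a v₁ u₁ ∧ ValRel dir j b v₂ u₂)) := by rw [ValRel]

theorem valRel_sum_iff {dir k a b vs vu} : ValRel dir k (.sum a b) vs vu ↔
    (HasTy [] vs (repEmul (.sum a b)) ∧ vu.ws 0 ∧
      ((∃ v u, vs = .inl v ∧ vu = .inl u ∧ SIsVal v ∧ UIsVal u ∧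
          (∀ j, j + 1 ≤ k → ValRel dir j a v u)) ∨
       (∃ v u, vs = .inr v ∧ vu = .inr u ∧ SIsVal v ∧ UIsVal u ∧
          (∀ j, j + 1 ≤ k → ValRel dir j b v u)))) := by rw [ValRel]

theorem valRel_arr_iff {dir k a b vs vu} : ValRel dir k (.arr a b) vs vu ↔
    (HasTy [] vs (repEmul (.arr a b)) ∧ vu.ws 0 ∧
      ∃ ts tu, vs = .lam (repEmul a) ts ∧ vu = .lam tu ∧
        ∀ j, j < k → ∀ vs' vu', SIsVal vs' → UIsVal vu' → ValRel dir j a vs' vu' →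
          ∀ Cs Cu, SEC.ok Cs → UEC.ok Cu →
            (∀ i, i ≤ j → ∀ ws wu, SIsVal ws → UIsVal wu → ValRel dir i b ws wu →
              Obs dir i (Cs.plug ws) (Cu.plug wu)) →
            Obs dir j (Cs.plug (ts.subst0 vs')) (Cu.plug (tu.subst0 vu'))) := by rw [ValRel]

theorem valRel_emul_zero_iff {dir k p vs vu} : ValRel dir k (.emul 0 p) vs vu ↔
    (HasTy [] vs (UValTy 0) ∧ vu.ws 0 ∧ vs = .unit ∧ p = .imprecise) := by rw [ValRel]

theorem valRel_emul_succ_iff {dir k n p vs vu} : ValRel dir k (.emul (n+1) p) vs vu ↔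
    (HasTy [] vs (UValTy (n+1)) ∧ vu.ws 0 ∧
      ((vs = inUnk ∧ p = .imprecise) ∨
       (∃ v, vs = inUnit v ∧ ValRel dir k .unit v vu) ∨
       (∃ v, vs = inBool v ∧ ValRel dir k .bool v vu) ∨
       (∃ v, vs = inProd v ∧ ValRel dir k (.prod (.emul n p) (.emul n p)) v vu) ∨
       (∃ v, vs = inSum v ∧ ValRel dir k (.sum (.emul n p) (.emul n p)) v vu) ∨
       (∃ v, vs = inArr v ∧ ValRel dir k (.arr (.emul n p) (.emul n p)) v vu))) := by
  rw [ValRel]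

theorem valRel_mono : ∀ (τ : PTy) {dir k j vs vu}, j ≤ k →
    ValRel dir k τ vs vu → ValRel dir j τ vs vu
  | .unit, dir, k, j, vs, vu, hle, h => by
      rw [valRel_unit_iff] at h ⊢; exact h
  | .bool, dir, k, j, vs, vu, hle, h => by
      rw [valRel_bool_iff] at h ⊢; exact h
  | .prod a b, dir, k, j, vs, vu, hle, h => by
      rw [valRel_prod_iff] at h ⊢
      obtain ⟨h1, h2, v1, v2, u1, u2, e1, e2, s1, s2, q1, q2, hin⟩ := h
      exact ⟨h1, h2, v1, v2, u1, u2, e1, e2, s1, s2, q1, q2,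
        fun j' hj' => hin j' (by omega)⟩
  | .sum a b, dir, k, j, vs, vu, hle, h => by
      rw [valRel_sum_iff] at h ⊢
      obtain ⟨h1, h2, hd⟩ := h
      refine ⟨h1, h2, ?_⟩
      rcases hd with ⟨v, u, e1, e2, s, q, hin⟩ | ⟨v, u, e1, e2, s, q, hin⟩
      · exact .inl ⟨v, u, e1, e2, s, q, fun j' hj' => hin j' (by omega)⟩
      · exact .inr ⟨v, u, e1, e2, s, q, fun j' hj' => hin j' (by omega)⟩
  | .arr a b, dir, k, j, vs, vu, hle, h => by
      rw [valRel_arr_iff] at h ⊢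
      obtain ⟨h1, h2, ts, tu, e1, e2, hb⟩ := h
      exact ⟨h1, h2, ts, tu, e1, e2, fun j' hj' => hb j' (by omega)⟩
  | .emul 0 p, dir, k, j, vs, vu, hle, h => by
      rw [valRel_emul_zero_iff] at h ⊢; exact h
  | .emul (n+1) p, dir, k, j, vs, vu, hle, h => by
      rw [valRel_emul_succ_iff] at h ⊢
      obtain ⟨h1, h2, hd⟩ := h
      refine ⟨h1, h2, ?_⟩
      rcases hd with h | ⟨v, e, hv⟩ | ⟨v, e, hv⟩ | ⟨v, e, hv⟩ | ⟨v, e, hv⟩ | ⟨v, e, hv⟩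
      · exact .inl h
      · exact .inr (.inl ⟨v, e, valRel_mono _ hle hv⟩)
      · exact .inr (.inr (.inl ⟨v, e, valRel_mono _ hle hv⟩))
      · exact .inr (.inr (.inr (.inl ⟨v, e, valRel_mono _ hle hv⟩)))
      · exact .inr (.inr (.inr (.inr (.inl ⟨v, e, valRel_mono _ hle hv⟩))))
      · exact .inr (.inr (.inr (.inr (.inr ⟨v, e, valRel_mono _ hle hv⟩))))
  termination_by τ => τ.weight
  decreasing_by
    all_goals simp [PTy.weight, pow_succ]
    all_goals nlinarith [Nat.one_le_pow n 3 (by omega)]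

theorem valRel_sval : ∀ (τ : PTy) {dir k vs vu}, ValRel dir k τ vs vu → SIsVal vs
  | .unit, dir, k, vs, vu, h => by
      rw [valRel_unit_iff] at h; rw [h.2.2.1]; exact .unit
  | .bool, dir, k, vs, vu, h => by
      rw [valRel_bool_iff] at h
      rcases h.2.2 with ⟨e, _⟩ | ⟨e, _⟩ <;> rw [e]
      exacts [.tt, .ff]
  | .prod a b, dir, k, vs, vu, h => by
      rw [valRel_prod_iff] at h
      obtain ⟨_, _, v1, v2, u1, u2, e1, _, s1, s2, _⟩ := h
      rw [e1]; exact .pair s1 s2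
  | .sum a b, dir, k, vs, vu, h => by
      rw [valRel_sum_iff] at h
      rcases h.2.2 with ⟨v, u, e1, _, s, _⟩ | ⟨v, u, e1, _, s, _⟩ <;> rw [e1]
      exacts [.inl s, .inr s]
  | .arr a b, dir, k, vs, vu, h => by
      rw [valRel_arr_iff] at h
      obtain ⟨_, _, ts, tu, e1, _⟩ := h
      rw [e1]; exact .lam
  | .emul 0 p, dir, k, vs, vu, h => by
      rw [valRel_emul_zero_iff] at h; rw [h.2.2.1]; exact .unit
  | .emul (n+1) p, dir, k, vs, vu, h => by
      rw [valRel_emul_succ_iff] at h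
      rcases h.2.2 with ⟨e, _⟩ | ⟨v, e, hv⟩ | ⟨v, e, hv⟩ | ⟨v, e, hv⟩ | ⟨v, e, hv⟩ |
        ⟨v, e, hv⟩ <;> rw [e]
      · exact sval_inUnk
      · exact sval_inUnit (valRel_sval _ hv)
      · exact sval_inBool (valRel_sval _ hv)
      · exact sval_inProd (valRel_sval _ hv)
      · exact sval_inSum (valRel_sval _ hv)
      · exact sval_inArr (valRel_sval _ hv)
  termination_by τ => τ.weight
  decreasing_by
    all_goals simp [PTy.weight, pow_succ]
    all_goals nlinarith [Nat.one_le_pow n 3 (by omega)]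

theorem valRel_uws : ∀ (τ : PTy) {dir k vs vu}, ValRel dir k τ vs vu → vu.ws 0
  | .unit, _, _, _, _, h => by rw [valRel_unit_iff] at h; exact h.2.1
  | .bool, _, _, _, _, h => by rw [valRel_bool_iff] at h; exact h.2.1
  | .prod _ _, _, _, _, _, h => by rw [valRel_prod_iff] at h; exact h.2.1
  | .sum _ _, _, _, _, _, h => by rw [valRel_sum_iff] at h; exact h.2.1
  | .arr _ _, _, _, _, _, h => by rw [valRel_arr_iff] at h; exact h.2.1
  | .emul 0 _, _, _, _, _, h => by rw [valRel_emul_zero_iff] at h; exact h.2.1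
  | .emul (_+1) _, _, _, _, _, h => by rw [valRel_emul_succ_iff] at h; exact h.2.1

theorem valRel_emul_hasTy {dir k n p vs vu} (h : ValRel dir k (.emul n p) vs vu) :
    HasTy [] vs (UValTy n) := by
  cases n
  · rw [valRel_emul_zero_iff] at h; exact h.1
  · rw [valRel_emul_succ_iff] at h; exact h.1

end FAC
namespace FAC

theorem uval_canon {v : STm} {n : ℕ} (hv : SIsVal v) (h : HasTy [] v (UValTy (n+1))) :
    v = inUnk ∨
    (∃ w, v = inUnit w ∧ SIsVal w ∧ HasTy [] w .unit) ∨
    (∃ w, v = inBool w ∧ SIsVal w ∧ HasTy [] w .bool) ∨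
    (∃ w₁ w₂, v = inProd (.pair w₁ w₂) ∧ SIsVal w₁ ∧ SIsVal w₂ ∧
      HasTy [] w₁ (UValTy n) ∧ HasTy [] w₂ (UValTy n)) ∨
    (∃ w, (v = inSum (.inl w) ∨ v = inSum (.inr w)) ∧ SIsVal w ∧ HasTy [] w (UValTy n)) ∨
    (∃ w, v = inArr w ∧ SIsVal w ∧ HasTy [] w (.arr (UValTy n) (UValTy n))) := by
  rcases canon_sum h hv with ⟨w0, e0, hv0, ht0⟩ | ⟨w1, e1, hv1, ht1⟩
  · left; rw [e0, canon_unit ht0 hv0]; rfl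
  · rcases canon_sum ht1 hv1 with ⟨w2, e2, hv2, ht2⟩ | ⟨w2, e2, hv2, ht2⟩
    · right; left
      exact ⟨w2, by rw [e1, e2]; rfl, hv2, ht2⟩
    rcases canon_sum ht2 hv2 with ⟨w3, e3, hv3, ht3⟩ | ⟨w3, e3, hv3, ht3⟩
    · right; right; left
      exact ⟨w3, by rw [e1, e2, e3]; rfl, hv3, ht3⟩
    rcases canon_sum ht3 hv3 with ⟨w4, e4, hv4, ht4⟩ | ⟨w4, e4, hv4, ht4⟩
    · obtain ⟨a, b, ep, hva, hvb, hta, htb⟩ := canon_pair ht4 hv4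
      right; right; right; left
      exact ⟨a, b, by rw [e1, e2, e3, e4, ep]; rfl, hva, hvb, hta, htb⟩
    rcases canon_sum ht4 hv4 with ⟨w5, e5, hv5, ht5⟩ | ⟨w5, e5, hv5, ht5⟩
    · rcases canon_sum ht5 hv5 with ⟨w6, e6, hv6, ht6⟩ | ⟨w6, e6, hv6, ht6⟩
      · right; right; right; right; left
        exact ⟨w6, .inl (by rw [e1, e2, e3, e4, e5, e6]; rfl), hv6, ht6⟩
      · right; right; right; right; left
        exact ⟨w6, .inr (by rw [e1, e2, e3, e4, e5, e6]; rfl), hv6, ht6⟩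
    · right; right; right; right; right
      exact ⟨w5, by rw [e1, e2, e3, e4, e5]; rfl, hv5, ht5⟩

theorem updown_total (d : ℕ) : ∀ m : ℕ,
    (∀ vs, SIsVal vs → HasTy [] vs (UValTy (m+d)) →
      ∃ ws, SStepStar (.app (downgrade m d) vs) ws ∧ SIsVal ws ∧ HasTy [] ws (UValTy m)) ∧
    (∀ vs, SIsVal vs → HasTy [] vs (UValTy m) →
      ∃ ws, SStepStar (.app (upgrade m d) vs) ws ∧ SIsVal ws ∧
        HasTy [] ws (UValTy (m+d))) := by
  intro m
  induction m with
  | zero =>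
    constructor
    · intro vs hv _
      exact ⟨unkUVal 0, by simpa [downgrade] using updown_zero_red d false hv, sval_unkUVal 0,
        hasTy_unkUVal [] 0⟩
    · intro vs hv _
      refine ⟨unkUVal d, ?_, sval_unkUVal d, by
        have : (0:ℕ)+d = d := by omega
        rw [this]; exact hasTy_unkUVal [] d⟩
      simpa [upgrade] using updown_zero_red d true hv
  | succ m ih =>
    have hsD : (downgrade m d).ws 0 := ws_updown d m false
    have hsU : (upgrade m d).ws 0 := ws_updown d m true
    have hvD : SIsVal (downgrade m d) := sval_updown d m false
    have hvU : SIsVal (upgrade m d) := sval_updown d m true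
    have eD : downgrade (m+1) d =
        .lam (UValTy (m+d+1)) (bigBody (downgrade m d) (upgrade m d) (UValTy m)) := by
      have := updown_succ_eq d m false
      simpa [downgrade, upgrade] using this
    have eU : upgrade (m+1) d =
        .lam (UValTy (m+1)) (bigBody (upgrade m d) (downgrade m d) (UValTy (m+d))) := by
      have := updown_succ_eq d m true
      simpa [downgrade, upgrade] using this
    constructor
    · -- downgrade (m+1)
      intro vs hv hty
      rw [show m+1+d = (m+d)+1 from by omega] at hty
      rw [eD]
      rcases uval_canon hv hty with e | ⟨w, e, hvw, htw⟩ | ⟨w, e, hvw, htw⟩ |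
        ⟨w₁, w₂, e, hv1, hv2, ht1, ht2⟩ | ⟨w, e, hvw, htw⟩ | ⟨w, e, hvw, htw⟩
      · rw [e]
        exact ⟨inUnk, bigBody_red_unk hsD hsU, sval_inUnk, hasTy_inUnk⟩
      · rw [e]
        exact ⟨inUnit w, bigBody_red_unit hsD hsU hvw, sval_inUnit hvw, hasTy_inUnit htw⟩
      · rw [e]
        exact ⟨inBool w, bigBody_red_bool hsD hsU hvw, sval_inBool hvw, hasTy_inBool htw⟩
      · rw [e]
        obtain ⟨x₁, r₁, xv₁, xt₁⟩ := ih.1 w₁ hv1 ht1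
        obtain ⟨x₂, r₂, xv₂, xt₂⟩ := ih.1 w₂ hv2 ht2
        exact ⟨inProd (.pair x₁ x₂), bigBody_red_prod hsD hsU hvD hv1 hv2 r₁ xv₁ r₂,
          sval_inProd (.pair xv₁ xv₂), hasTy_inProd (.pair xt₁ xt₂)⟩
      · obtain ⟨x, r, xv, xt⟩ := ih.1 w hvw htw
        rcases e with e | e <;> rw [e]
        · exact ⟨inSum (.inl x), bigBody_red_sum_l hsD hsU hvD hvw r,
            sval_inSum (.inl xv), hasTy_inSum (.inl xt)⟩
        · exact ⟨inSum (.inr x), bigBody_red_sum_r hsD hsU hvD hvw r,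
            sval_inSum (.inr xv), hasTy_inSum (.inr xt)⟩
      · rw [e]
        refine ⟨inArr (.lam (UValTy m)
            (.app (downgrade m d) (.app w (.app (upgrade m d) (.var 0))))),
          bigBody_red_arr hsD hsU hvw (hasTy_ws htw), sval_inArr .lam,
          hasTy_inArr (.lam (.app (hasTy_downgrade m d _)
            (.app (hasTy_closed_weaken htw _)
              (.app (hasTy_upgrade m d _) (.var (by simp))))))⟩
    · -- upgrade (m+1)
      intro vs hv hty
      rw [eU, show m+1+d = (m+d)+1 from by omega]
      rcases uval_canon hv hty with e | ⟨w, e, hvw, htw⟩ | ⟨w, e, hvw, htw⟩ |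
        ⟨w₁, w₂, e, hv1, hv2, ht1, ht2⟩ | ⟨w, e, hvw, htw⟩ | ⟨w, e, hvw, htw⟩
      · rw [e]
        exact ⟨inUnk, bigBody_red_unk hsU hsD, sval_inUnk, hasTy_inUnk⟩
      · rw [e]
        exact ⟨inUnit w, bigBody_red_unit hsU hsD hvw, sval_inUnit hvw, hasTy_inUnit htw⟩
      · rw [e]
        exact ⟨inBool w, bigBody_red_bool hsU hsD hvw, sval_inBool hvw, hasTy_inBool htw⟩
      · rw [e]
        obtain ⟨x₁, r₁, xv₁, xt₁⟩ := ih.2 w₁ hv1 ht1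
        obtain ⟨x₂, r₂, xv₂, xt₂⟩ := ih.2 w₂ hv2 ht2
        exact ⟨inProd (.pair x₁ x₂), bigBody_red_prod hsU hsD hvU hv1 hv2 r₁ xv₁ r₂,
          sval_inProd (.pair xv₁ xv₂), hasTy_inProd (.pair xt₁ xt₂)⟩
      · obtain ⟨x, r, xv, xt⟩ := ih.2 w hvw htw
        rcases e with e | e <;> rw [e]
        · exact ⟨inSum (.inl x), bigBody_red_sum_l hsU hsD hvU hvw r,
            sval_inSum (.inl xv), hasTy_inSum (.inl xt)⟩
        · exact ⟨inSum (.inr x), bigBody_red_sum_r hsU hsD hvU hvw r,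
            sval_inSum (.inr xv), hasTy_inSum (.inr xt)⟩
      · rw [e]
        refine ⟨inArr (.lam (UValTy (m+d))
            (.app (upgrade m d) (.app w (.app (downgrade m d) (.var 0))))),
          bigBody_red_arr hsU hsD hvw (hasTy_ws htw), sval_inArr .lam,
          hasTy_inArr (.lam (.app (hasTy_upgrade m d _)
            (.app (hasTy_closed_weaken htw _)
              (.app (hasTy_downgrade m d _) (.var (by simp))))))⟩

end FAC
namespace FAC

theorem updown_works (dir : Dir) (d : ℕ) (p : Prec) : ∀ m k : ℕ,
    ((k < m ∧ p = .precise) ∨ (dir = .lt ∧ p = .imprecise)) →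
    (∀ vs vu, ValRel dir k (.emul (m+d) p) vs vu →
      ∃ ws, SStepStar (.app (downgrade m d) vs) ws ∧ SIsVal ws ∧
        ValRel dir k (.emul m p) ws vu) ∧
    (∀ vs vu, ValRel dir k (.emul m p) vs vu →
      ∃ ws, SStepStar (.app (upgrade m d) vs) ws ∧ SIsVal ws ∧
        ValRel dir k (.emul (m+d) p) ws vu) := by
  intro m
  induction m with
  | zero =>
    intro k hside
    have hp : p = .imprecise := by
      rcases hside with ⟨h, _⟩ | ⟨_, h⟩
      · omega
      · exact h
    constructor
    · intro vs vu h
      have hv := valRel_sval _ h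
      have hws := valRel_uws _ h
      refine ⟨unkUVal 0, by simpa [downgrade] using updown_zero_red d false hv, sval_unkUVal 0, ?_⟩
      rw [valRel_emul_zero_iff]
      exact ⟨.unit, hws, rfl, hp⟩
    · intro vs vu h
      rw [valRel_emul_zero_iff] at h
      obtain ⟨_, hws, hvs, _⟩ := h
      subst hvs
      refine ⟨unkUVal d, by simpa [upgrade] using updown_zero_red d true .unit, sval_unkUVal d, ?_⟩
      rw [show (0:ℕ)+d = d from by omega]
      cases d with
      | zero => rw [valRel_emul_zero_iff]; exact ⟨.unit, hws, rfl, hp⟩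
      | succ e => rw [valRel_emul_succ_iff]; exact ⟨hasTy_inUnk, hws, .inl ⟨rfl, hp⟩⟩
  | succ m ih =>
    intro k hside
    have ihS : ∀ k', k' < k → ((k' < m ∧ p = .precise) ∨ (dir = .lt ∧ p = .imprecise)) := by
      intro k' hk'
      rcases hside with ⟨h1, h2⟩ | h
      · exact .inl ⟨by omega, h2⟩
      · exact .inr h
    have hsD : (downgrade m d).ws 0 := ws_updown d m false
    have hsU : (upgrade m d).ws 0 := ws_updown d m true
    have hvD : SIsVal (downgrade m d) := sval_updown d m false
    have hvU : SIsVal (upgrade m d) := sval_updown d m true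
    have eD : downgrade (m+1) d =
        .lam (UValTy (m+d+1)) (bigBody (downgrade m d) (upgrade m d) (UValTy m)) := by
      simpa [downgrade, upgrade] using updown_succ_eq d m false
    have eU : upgrade (m+1) d =
        .lam (UValTy (m+1)) (bigBody (upgrade m d) (downgrade m d) (UValTy (m+d))) := by
      simpa [downgrade, upgrade] using updown_succ_eq d m true
    constructor
    · -- downgrade (m+1) d
      intro vs vu h
      rw [show m+1+d = (m+d)+1 from by omega, valRel_emul_succ_iff] at h
      obtain ⟨htyv, hws, hd⟩ := h
      rw [eD]
      rcases hd with ⟨e, hp⟩ | ⟨v, e, hv⟩ | ⟨v, e, hv⟩ | ⟨v, e, hv⟩ | ⟨v, e, hv⟩ |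
        ⟨v, e, hv⟩ <;> subst e
      · exact ⟨inUnk, bigBody_red_unk hsD hsU, sval_inUnk,
          by rw [valRel_emul_succ_iff]; exact ⟨hasTy_inUnk, hws, .inl ⟨rfl, hp⟩⟩⟩
      · have hvv := valRel_sval _ hv
        refine ⟨inUnit v, bigBody_red_unit hsD hsU hvv, sval_inUnit hvv, ?_⟩
        rw [valRel_emul_succ_iff]
        exact ⟨hasTy_inUnit (valRel_unit_iff.mp hv).1, hws, .inr (.inl ⟨v, rfl, hv⟩)⟩
      · have hvv := valRel_sval _ hv
        refine ⟨inBool v, bigBody_red_bool hsD hsU hvv, sval_inBool hvv, ?_⟩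
        rw [valRel_emul_succ_iff]
        exact ⟨hasTy_inBool (valRel_bool_iff.mp hv).1, hws, .inr (.inr (.inl ⟨v, rfl, hv⟩))⟩
      · -- prod
        rw [valRel_prod_iff] at hv
        obtain ⟨htyP, hwsP, v1, v2, u1, u2, e1, e2, s1, s2, q1, q2, hin⟩ := hv
        subst e1
        cases htyP with
        | pair ht1 ht2 =>
        cases k with
        | zero =>
          obtain ⟨x₁, r₁, xv₁, xt₁⟩ := (updown_total d m).1 v1 s1 ht1
          obtain ⟨x₂, r₂, xv₂, xt₂⟩ := (updown_total d m).1 v2 s2 ht2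
          refine ⟨inProd (.pair x₁ x₂), bigBody_red_prod hsD hsU hvD s1 s2 r₁ xv₁ r₂,
            sval_inProd (.pair xv₁ xv₂), ?_⟩
          rw [valRel_emul_succ_iff]
          refine ⟨hasTy_inProd (.pair xt₁ xt₂), hws, .inr (.inr (.inr (.inl ⟨_, rfl, ?_⟩)))⟩
          rw [valRel_prod_iff]
          exact ⟨.pair xt₁ xt₂, hwsP, x₁, x₂, u1, u2, rfl, e2, xv₁, xv₂, q1, q2,
            fun j hj => absurd hj (by omega)⟩
        | succ k' =>
          obtain ⟨hr1, hr2⟩ := hin k' (by omega)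
          obtain ⟨x₁, r₁, xv₁, hrel₁⟩ := (ih k' (ihS k' (by omega))).1 v1 u1 hr1
          obtain ⟨x₂, r₂, xv₂, hrel₂⟩ := (ih k' (ihS k' (by omega))).1 v2 u2 hr2
          refine ⟨inProd (.pair x₁ x₂), bigBody_red_prod hsD hsU hvD s1 s2 r₁ xv₁ r₂,
            sval_inProd (.pair xv₁ xv₂), ?_⟩
          rw [valRel_emul_succ_iff]
          refine ⟨hasTy_inProd (.pair (valRel_emul_hasTy hrel₁) (valRel_emul_hasTy hrel₂)),
            hws, .inr (.inr (.inr (.inl ⟨_, rfl, ?_⟩)))⟩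
          rw [valRel_prod_iff]
          exact ⟨.pair (valRel_emul_hasTy hrel₁) (valRel_emul_hasTy hrel₂), hwsP,
            x₁, x₂, u1, u2, rfl, e2, xv₁, xv₂, q1, q2,
            fun j hj => ⟨valRel_mono _ (by omega) hrel₁, valRel_mono _ (by omega) hrel₂⟩⟩
      · -- sum
        rw [valRel_sum_iff] at hv
        obtain ⟨htyS, hwsS, hd⟩ := hv
        rcases hd with ⟨v', u', e1, e2, s, q, hin⟩ | ⟨v', u', e1, e2, s, q, hin⟩ <;> subst e1
        · cases htyS with
          | inl ht' =>
          cases k with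
          | zero =>
            obtain ⟨x, r, xv, xt⟩ := (updown_total d m).1 v' s ht'
            refine ⟨inSum (.inl x), bigBody_red_sum_l hsD hsU hvD s r,
              sval_inSum (.inl xv), ?_⟩
            rw [valRel_emul_succ_iff]
            refine ⟨hasTy_inSum (.inl xt), hws, .inr (.inr (.inr (.inr (.inl ⟨_, rfl, ?_⟩))))⟩
            rw [valRel_sum_iff]
            exact ⟨.inl xt, hwsS, .inl ⟨x, u', rfl, e2, xv, q, fun j hj => absurd hj (by omega)⟩⟩
          | succ k' =>
            have hr := hin k' (by omega)
            obtain ⟨x, r, xv, hrel⟩ := (ih k' (ihS k' (by omega))).1 v' u' hr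
            refine ⟨inSum (.inl x), bigBody_red_sum_l hsD hsU hvD s r,
              sval_inSum (.inl xv), ?_⟩
            rw [valRel_emul_succ_iff]
            refine ⟨hasTy_inSum (.inl (valRel_emul_hasTy hrel)), hws,
              .inr (.inr (.inr (.inr (.inl ⟨_, rfl, ?_⟩))))⟩
            rw [valRel_sum_iff]
            exact ⟨.inl (valRel_emul_hasTy hrel), hwsS,
              .inl ⟨x, u', rfl, e2, xv, q, fun j hj => valRel_mono _ (by omega) hrel⟩⟩
        · cases htyS with
          | inr ht' =>
          cases k with
          | zero =>
            obtain ⟨x, r, xv, xt⟩ := (updown_total d m).1 v' s ht'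
            refine ⟨inSum (.inr x), bigBody_red_sum_r hsD hsU hvD s r,
              sval_inSum (.inr xv), ?_⟩
            rw [valRel_emul_succ_iff]
            refine ⟨hasTy_inSum (.inr xt), hws, .inr (.inr (.inr (.inr (.inl ⟨_, rfl, ?_⟩))))⟩
            rw [valRel_sum_iff]
            exact ⟨.inr xt, hwsS, .inr ⟨x, u', rfl, e2, xv, q, fun j hj => absurd hj (by omega)⟩⟩
          | succ k' =>
            have hr := hin k' (by omega)
            obtain ⟨x, r, xv, hrel⟩ := (ih k' (ihS k' (by omega))).1 v' u' hr
            refine ⟨inSum (.inr x), bigBody_red_sum_r hsD hsU hvD s r,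
              sval_inSum (.inr xv), ?_⟩
            rw [valRel_emul_succ_iff]
            refine ⟨hasTy_inSum (.inr (valRel_emul_hasTy hrel)), hws,
              .inr (.inr (.inr (.inr (.inl ⟨_, rfl, ?_⟩))))⟩
            rw [valRel_sum_iff]
            exact ⟨.inr (valRel_emul_hasTy hrel), hwsS,
              .inr ⟨x, u', rfl, e2, xv, q, fun j hj => valRel_mono _ (by omega) hrel⟩⟩
      · -- arrow
        rw [valRel_arr_iff] at hv
        obtain ⟨htyL, hwsL, ts, tu, ev, eu, P⟩ := hv
        have hvv : SIsVal v := by rw [ev]; exact .lam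
        have hvw : v.ws 0 := hasTy_ws htyL
        refine ⟨inArr (.lam (UValTy m)
            (.app (downgrade m d) (.app v (.app (upgrade m d) (.var 0))))),
          bigBody_red_arr hsD hsU hvv hvw, sval_inArr .lam, ?_⟩
        have htyNew : HasTy [] (.lam (UValTy m)
            (.app (downgrade m d) (.app v (.app (upgrade m d) (.var 0)))))
            (.arr (UValTy m) (UValTy m)) :=
          .lam (.app (hasTy_downgrade m d _) (.app (hasTy_closed_weaken htyL _)
            (.app (hasTy_upgrade m d _) (.var (by simp)))))
        rw [valRel_emul_succ_iff]
        refine ⟨hasTy_inArr htyNew, hws, .inr (.inr (.inr (.inr (.inr ⟨_, rfl, ?_⟩))))⟩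
        rw [valRel_arr_iff]
        refine ⟨htyNew, hws, _, tu, rfl, eu, ?_⟩
        intro j hj vs' vu' hvs' hvu' hrel' Cs Cu hCsOk hCuOk Hcont
        have ebody : (STm.app (downgrade m d)
            (.app v (.app (upgrade m d) (.var 0)))).subst0 vs' =
            .app (downgrade m d) (.app v (.app (upgrade m d) vs')) := by
          rw [show (STm.app (downgrade m d)
              (.app v (.app (upgrade m d) (.var 0)))).subst0 vs' =
              .app ((downgrade m d).subst (sub0 vs'))
                (.app (v.subst (sub0 vs')) (.app ((upgrade m d).subst (sub0 vs')) vs'))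
              from rfl,
            STm.subst_closed hsD, STm.subst_closed hsU, STm.subst_closed hvw]
        rw [ebody]
        obtain ⟨us, hredUp, husV, hrelUp⟩ := (ih j (ihS j (by omega))).2 vs' vu' hrel'
        set Ds : SEC := Cs.comp (.appR (downgrade m d) .hole) with hDs
        have hDsOk : Ds.ok := SEC.comp_ok hCsOk ⟨hvD, trivial⟩
        set E : SEC := Cs.comp (.appR (downgrade m d) (.appR v .hole)) with hE
        have hEOk : E.ok := SEC.comp_ok hCsOk ⟨hvD, hvv, trivial⟩
        have hPlugDs : ∀ t, Ds.plug t = Cs.plug (.app (downgrade m d) t) := by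
          intro t; rw [hDs, SEC.comp_plug]; rfl
        have hPlugE : ∀ t, E.plug t = Cs.plug (.app (downgrade m d) (.app v t)) := by
          intro t; rw [hE, SEC.comp_plug]; rfl
        have HcontD : ∀ i, i ≤ j → ∀ ws1 wu1, SIsVal ws1 → UIsVal wu1 →
            ValRel dir i (.emul (m+d) p) ws1 wu1 → Obs dir i (Ds.plug ws1) (Cu.plug wu1) := by
          intro i hi ws1 wu1 hws1 hwu1 hrel1
          obtain ⟨w2, hred2, hw2, hrel2⟩ := (ih i (ihS i (by omega))).1 ws1 wu1 hrel1
          refine obs_antired ?_ (Hcont i hi w2 wu1 hw2 hwu1 hrel2)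
          rw [hPlugDs]
          exact sstar_plug hCsOk hred2
        have hObs := P j (by omega) us vu' husV hvu' hrelUp Ds Cu hDsOk hCuOk HcontD
        refine obs_antired ?_ hObs
        have e1 : Cs.plug (.app (downgrade m d) (.app v (.app (upgrade m d) vs'))) =
            E.plug (.app (upgrade m d) vs') := (hPlugE _).symm
        rw [e1]
        refine sstar_trans (sstar_plug hEOk hredUp) ?_
        have e2 : E.plug us = Ds.plug (.app v us) := by rw [hPlugE, hPlugDs]
        rw [e2]
        refine sstar_plug hDsOk ?_
        rw [ev]
        exact sstar_one (SStep.beta husV)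
    · -- upgrade (m+1) d
      intro vs vu h
      rw [valRel_emul_succ_iff] at h
      obtain ⟨htyv, hws, hd⟩ := h
      rw [eU, show m+1+d = (m+d)+1 from by omega]
      rcases hd with ⟨e, hp⟩ | ⟨v, e, hv⟩ | ⟨v, e, hv⟩ | ⟨v, e, hv⟩ | ⟨v, e, hv⟩ |
        ⟨v, e, hv⟩ <;> subst e
      · exact ⟨inUnk, bigBody_red_unk hsU hsD, sval_inUnk,
          by rw [valRel_emul_succ_iff]; exact ⟨hasTy_inUnk, hws, .inl ⟨rfl, hp⟩⟩⟩
      · have hvv := valRel_sval _ hv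
        refine ⟨inUnit v, bigBody_red_unit hsU hsD hvv, sval_inUnit hvv, ?_⟩
        rw [valRel_emul_succ_iff]
        exact ⟨hasTy_inUnit (valRel_unit_iff.mp hv).1, hws, .inr (.inl ⟨v, rfl, hv⟩)⟩
      · have hvv := valRel_sval _ hv
        refine ⟨inBool v, bigBody_red_bool hsU hsD hvv, sval_inBool hvv, ?_⟩
        rw [valRel_emul_succ_iff]
        exact ⟨hasTy_inBool (valRel_bool_iff.mp hv).1, hws, .inr (.inr (.inl ⟨v, rfl, hv⟩))⟩
      · -- prod
        rw [valRel_prod_iff] at hv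
        obtain ⟨htyP, hwsP, v1, v2, u1, u2, e1, e2, s1, s2, q1, q2, hin⟩ := hv
        subst e1
        cases htyP with
        | pair ht1 ht2 =>
        cases k with
        | zero =>
          obtain ⟨x₁, r₁, xv₁, xt₁⟩ := (updown_total d m).2 v1 s1 ht1
          obtain ⟨x₂, r₂, xv₂, xt₂⟩ := (updown_total d m).2 v2 s2 ht2
          refine ⟨inProd (.pair x₁ x₂), bigBody_red_prod hsU hsD hvU s1 s2 r₁ xv₁ r₂,
            sval_inProd (.pair xv₁ xv₂), ?_⟩
          rw [valRel_emul_succ_iff]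
          refine ⟨hasTy_inProd (.pair xt₁ xt₂), hws, .inr (.inr (.inr (.inl ⟨_, rfl, ?_⟩)))⟩
          rw [valRel_prod_iff]
          exact ⟨.pair xt₁ xt₂, hwsP, x₁, x₂, u1, u2, rfl, e2, xv₁, xv₂, q1, q2,
            fun j hj => absurd hj (by omega)⟩
        | succ k' =>
          obtain ⟨hr1, hr2⟩ := hin k' (by omega)
          obtain ⟨x₁, r₁, xv₁, hrel₁⟩ := (ih k' (ihS k' (by omega))).2 v1 u1 hr1
          obtain ⟨x₂, r₂, xv₂, hrel₂⟩ := (ih k' (ihS k' (by omega))).2 v2 u2 hr2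
          refine ⟨inProd (.pair x₁ x₂), bigBody_red_prod hsU hsD hvU s1 s2 r₁ xv₁ r₂,
            sval_inProd (.pair xv₁ xv₂), ?_⟩
          rw [valRel_emul_succ_iff]
          refine ⟨hasTy_inProd (.pair (valRel_emul_hasTy hrel₁) (valRel_emul_hasTy hrel₂)),
            hws, .inr (.inr (.inr (.inl ⟨_, rfl, ?_⟩)))⟩
          rw [valRel_prod_iff]
          exact ⟨.pair (valRel_emul_hasTy hrel₁) (valRel_emul_hasTy hrel₂), hwsP,
            x₁, x₂, u1, u2, rfl, e2, xv₁, xv₂, q1, q2,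
            fun j hj => ⟨valRel_mono _ (by omega) hrel₁, valRel_mono _ (by omega) hrel₂⟩⟩
      · -- sum
        rw [valRel_sum_iff] at hv
        obtain ⟨htyS, hwsS, hd⟩ := hv
        rcases hd with ⟨v', u', e1, e2, s, q, hin⟩ | ⟨v', u', e1, e2, s, q, hin⟩ <;> subst e1
        · cases htyS with
          | inl ht' =>
          cases k with
          | zero =>
            obtain ⟨x, r, xv, xt⟩ := (updown_total d m).2 v' s ht'
            refine ⟨inSum (.inl x), bigBody_red_sum_l hsU hsD hvU s r,
              sval_inSum (.inl xv), ?_⟩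
            rw [valRel_emul_succ_iff]
            refine ⟨hasTy_inSum (.inl xt), hws, .inr (.inr (.inr (.inr (.inl ⟨_, rfl, ?_⟩))))⟩
            rw [valRel_sum_iff]
            exact ⟨.inl xt, hwsS, .inl ⟨x, u', rfl, e2, xv, q, fun j hj => absurd hj (by omega)⟩⟩
          | succ k' =>
            have hr := hin k' (by omega)
            obtain ⟨x, r, xv, hrel⟩ := (ih k' (ihS k' (by omega))).2 v' u' hr
            refine ⟨inSum (.inl x), bigBody_red_sum_l hsU hsD hvU s r,
              sval_inSum (.inl xv), ?_⟩
            rw [valRel_emul_succ_iff]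
            refine ⟨hasTy_inSum (.inl (valRel_emul_hasTy hrel)), hws,
              .inr (.inr (.inr (.inr (.inl ⟨_, rfl, ?_⟩))))⟩
            rw [valRel_sum_iff]
            exact ⟨.inl (valRel_emul_hasTy hrel), hwsS,
              .inl ⟨x, u', rfl, e2, xv, q, fun j hj => valRel_mono _ (by omega) hrel⟩⟩
        · cases htyS with
          | inr ht' =>
          cases k with
          | zero =>
            obtain ⟨x, r, xv, xt⟩ := (updown_total d m).2 v' s ht'
            refine ⟨inSum (.inr x), bigBody_red_sum_r hsU hsD hvU s r,
              sval_inSum (.inr xv), ?_⟩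
            rw [valRel_emul_succ_iff]
            refine ⟨hasTy_inSum (.inr xt), hws, .inr (.inr (.inr (.inr (.inl ⟨_, rfl, ?_⟩))))⟩
            rw [valRel_sum_iff]
            exact ⟨.inr xt, hwsS, .inr ⟨x, u', rfl, e2, xv, q, fun j hj => absurd hj (by omega)⟩⟩
          | succ k' =>
            have hr := hin k' (by omega)
            obtain ⟨x, r, xv, hrel⟩ := (ih k' (ihS k' (by omega))).2 v' u' hr
            refine ⟨inSum (.inr x), bigBody_red_sum_r hsU hsD hvU s r,
              sval_inSum (.inr xv), ?_⟩
            rw [valRel_emul_succ_iff]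
            refine ⟨hasTy_inSum (.inr (valRel_emul_hasTy hrel)), hws,
              .inr (.inr (.inr (.inr (.inl ⟨_, rfl, ?_⟩))))⟩
            rw [valRel_sum_iff]
            exact ⟨.inr (valRel_emul_hasTy hrel), hwsS,
              .inr ⟨x, u', rfl, e2, xv, q, fun j hj => valRel_mono _ (by omega) hrel⟩⟩
      · -- arrow
        rw [valRel_arr_iff] at hv
        obtain ⟨htyL, hwsL, ts, tu, ev, eu, P⟩ := hv
        have hvv : SIsVal v := by rw [ev]; exact .lam
        have hvw : v.ws 0 := hasTy_ws htyL
        refine ⟨inArr (.lam (UValTy (m+d))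
            (.app (upgrade m d) (.app v (.app (downgrade m d) (.var 0))))),
          bigBody_red_arr hsU hsD hvv hvw, sval_inArr .lam, ?_⟩
        have htyNew : HasTy [] (.lam (UValTy (m+d))
            (.app (upgrade m d) (.app v (.app (downgrade m d) (.var 0)))))
            (.arr (UValTy (m+d)) (UValTy (m+d))) :=
          .lam (.app (hasTy_upgrade m d _) (.app (hasTy_closed_weaken htyL _)
            (.app (hasTy_downgrade m d _) (.var (by simp)))))
        rw [valRel_emul_succ_iff]
        refine ⟨hasTy_inArr htyNew, hws, .inr (.inr (.inr (.inr (.inr ⟨_, rfl, ?_⟩))))⟩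
        rw [valRel_arr_iff]
        refine ⟨htyNew, hws, _, tu, rfl, eu, ?_⟩
        intro j hj vs' vu' hvs' hvu' hrel' Cs Cu hCsOk hCuOk Hcont
        have ebody : (STm.app (upgrade m d)
            (.app v (.app (downgrade m d) (.var 0)))).subst0 vs' =
            .app (upgrade m d) (.app v (.app (downgrade m d) vs')) := by
          rw [show (STm.app (upgrade m d)
              (.app v (.app (downgrade m d) (.var 0)))).subst0 vs' =
              .app ((upgrade m d).subst (sub0 vs'))
                (.app (v.subst (sub0 vs')) (.app ((downgrade m d).subst (sub0 vs')) vs'))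
              from rfl,
            STm.subst_closed hsD, STm.subst_closed hsU, STm.subst_closed hvw]
        rw [ebody]
        obtain ⟨us, hredDn, husV, hrelDn⟩ := (ih j (ihS j (by omega))).1 vs' vu' hrel'
        set Ds : SEC := Cs.comp (.appR (upgrade m d) .hole) with hDs
        have hDsOk : Ds.ok := SEC.comp_ok hCsOk ⟨hvU, trivial⟩
        set E : SEC := Cs.comp (.appR (upgrade m d) (.appR v .hole)) with hE
        have hEOk : E.ok := SEC.comp_ok hCsOk ⟨hvU, hvv, trivial⟩
        have hPlugDs : ∀ t, Ds.plug t = Cs.plug (.app (upgrade m d) t) := by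
          intro t; rw [hDs, SEC.comp_plug]; rfl
        have hPlugE : ∀ t, E.plug t = Cs.plug (.app (upgrade m d) (.app v t)) := by
          intro t; rw [hE, SEC.comp_plug]; rfl
        have HcontU : ∀ i, i ≤ j → ∀ ws1 wu1, SIsVal ws1 → UIsVal wu1 →
            ValRel dir i (.emul m p) ws1 wu1 → Obs dir i (Ds.plug ws1) (Cu.plug wu1) := by
          intro i hi ws1 wu1 hws1 hwu1 hrel1
          obtain ⟨w2, hred2, hw2, hrel2⟩ := (ih i (ihS i (by omega))).2 ws1 wu1 hrel1
          refine obs_antired ?_ (Hcont i hi w2 wu1 hw2 hwu1 hrel2)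
          rw [hPlugDs]
          exact sstar_plug hCsOk hred2
        have hObs := P j (by omega) us vu' husV hvu' hrelDn Ds Cu hDsOk hCuOk HcontU
        refine obs_antired ?_ hObs
        have e1 : Cs.plug (.app (upgrade m d) (.app v (.app (downgrade m d) vs'))) =
            E.plug (.app (downgrade m d) vs') := (hPlugE _).symm
        rw [e1]
        refine sstar_trans (sstar_plug hEOk hredDn) ?_
        have e2 : E.plug us = Ds.plug (.app v us) := by rw [hPlugE, hPlugDs]
        rw [e2]
        refine sstar_plug hDsOk ?_
        rw [ev]
        exact sstar_one (SStep.beta husV)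

end FAC
open FAC in
/-- compatibility lemma for downgrade and upgrade. -/
theorem downgrade_upgrade_compat
    (dir : Dir) (n m d : ℕ) (p : Prec) (Γ : List PTy) (t : STm) (u : UTm)
    (hside : (n < m ∧ p = .precise) ∨ (dir = .lt ∧ p = .imprecise)) :
    (LogRelN dir n Γ t u (.emul (m+d) p) →
      LogRelN dir n Γ (.app (downgrade m d) t) u (.emul m p)) ∧
    (LogRelN dir n Γ t u (.emul m p) →
      LogRelN dir n Γ (.app (upgrade m d) t) u (.emul (m+d) p)) := by
  have hsd : ∀ k, k ≤ n → ((k < m ∧ p = .precise) ∨ (dir = .lt ∧ p = .imprecise)) := by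
    intro k hk
    rcases hside with ⟨h1, h2⟩ | h
    · exact .inl ⟨by omega, h2⟩
    · exact .inr h
  constructor
  · rintro ⟨hty, hws, hsem⟩
    refine ⟨.app (hasTy_downgrade m d _) hty, hws, ?_⟩
    intro k hk γs γu hγ
    have ht := hsem k hk γs γu hγ
    intro Cs Cu hCC
    obtain ⟨hCsOk, hCuOk, hcont⟩ := hCC
    have esub : (STm.app (downgrade m d) t).subst γs = .app (downgrade m d) (t.subst γs) := by
      rw [show (STm.app (downgrade m d) t).subst γs =
          .app ((downgrade m d).subst γs) (t.subst γs) from rfl,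
        STm.subst_closed (show (downgrade m d).ws 0 from ws_updown d m false)]
    rw [esub]
    set Ds : SEC := Cs.comp (.appR (downgrade m d) .hole) with hDs
    have hDsOk : Ds.ok := SEC.comp_ok hCsOk ⟨sval_updown d m false, trivial⟩
    have hPlug : ∀ x, Ds.plug x = Cs.plug (.app (downgrade m d) x) := by
      intro x; rw [hDs, SEC.comp_plug]; rfl
    have hDCont : ContRel dir k (.emul (m+d) p) Ds Cu := by
      refine ⟨hDsOk, hCuOk, ?_⟩
      intro i hi vs vu hvs hvu hrel
      obtain ⟨ws, hred, hwv, hrelw⟩ :=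
        (updown_works dir d p m i (hsd i (le_trans hi hk))).1 vs vu hrel
      refine obs_antired ?_ (hcont i hi ws vu hwv hvu hrelw)
      rw [hPlug]
      exact sstar_plug hCsOk hred
    have := ht Ds Cu hDCont
    rwa [hPlug] at this
  · rintro ⟨hty, hws, hsem⟩
    refine ⟨.app (hasTy_upgrade m d _) hty, hws, ?_⟩
    intro k hk γs γu hγ
    have ht := hsem k hk γs γu hγ
    intro Cs Cu hCC
    obtain ⟨hCsOk, hCuOk, hcont⟩ := hCC
    have esub : (STm.app (upgrade m d) t).subst γs = .app (upgrade m d) (t.subst γs) := by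
      rw [show (STm.app (upgrade m d) t).subst γs =
          .app ((upgrade m d).subst γs) (t.subst γs) from rfl,
        STm.subst_closed (show (upgrade m d).ws 0 from ws_updown d m true)]
    rw [esub]
    set Ds : SEC := Cs.comp (.appR (upgrade m d) .hole) with hDs
    have hDsOk : Ds.ok := SEC.comp_ok hCsOk ⟨sval_updown d m true, trivial⟩
    have hPlug : ∀ x, Ds.plug x = Cs.plug (.app (upgrade m d) x) := by
      intro x; rw [hDs, SEC.comp_plug]; rfl
    have hDCont : ContRel dir k (.emul m p) Ds Cu := by
      refine ⟨hDsOk, hCuOk, ?_⟩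
      intro i hi vs vu hvs hvu hrel
      obtain ⟨ws, hred, hwv, hrelw⟩ :=
        (updown_works dir d p m i (hsd i (le_trans hi hk))).2 vs vu hrel
      refine obs_antired ?_ (hcont i hi ws vu hwv hvu hrelw)
      rw [hPlug]
      exact sstar_plug hCsOk hred
    have := ht Ds Cu hDCont
    rwa [hPlug] at this
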